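/- arXiv:2601.22446 — 5 statements merged into one kernel-verified Lean document; each statement's English description precedes it below -/
import Mathlib

section
/- (Supermartingale Property) Fix u ∈ [0,1] and suppose the null hypothesis H_{0,u}: R(u) > ε holds, where R(u) = (1 − ρ_deploy)·E[l_1·1{U_1 < u}]. Then for any sequence of nonnegative F_{t-1}-measurable random variables λ_t(u) satisfying 1 + λ_t(u)·D_t(u) ≥ 0 almost surely, the wealth process defined by K_0(u) = 1 and K_t(u) = K_{t-1}(u)·(1 + λ_t(u)·D_t(u)) is a nonnegative supermartingale with respect to the filtration (F_t)_{t≥0}. -/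
open MeasureTheory ProbabilityTheory

/-- Supermartingale property: under the null hypothesis `R(u) > ε`, the wealth process
`K_0(u) = 1`, `K_t(u) = K_{t-1}(u)·(1 + λ_t(u)·D_t(u))` is a nonnegative supermartingale
with respect to the filtration `(F_t)`. -/
theorem stmt_3 {Ω : Type*} {m0 : MeasurableSpace Ω} {μ : Measure Ω} [IsProbabilityMeasure μ]
    (ℱ : MeasureTheory.Filtration ℕ m0)
    (l U uhat ξ π : ℕ → Ω → ℝ)
    (ρwarm ρdeploy : ℝ) (Twarm : ℕ)
    (hρd : 0 < ρdeploy) (hρdw : ρdeploy ≤ ρwarm) (hρw : ρwarm < 1)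
    (ρ : ℕ → ℝ) (hρ : ∀ s, ρ s = if s ≤ Twarm then ρwarm else ρdeploy)
    (ρmin : ℝ) (hρmin : ρmin = ρdeploy)
    (ε : ℝ) (hε : ε ∈ Set.Ioo (0 : ℝ) 1)
    (hl_meas : ∀ s, 1 ≤ s → Measurable[ℱ s] (l s))
    (hU_meas : ∀ s, 1 ≤ s → Measurable[ℱ s] (U s))
    (hl_mem : ∀ s ω, 1 ≤ s → l s ω ∈ Set.Icc (0 : ℝ) 1)
    (hU_mem : ∀ s ω, 1 ≤ s → U s ω ∈ Set.Icc (0 : ℝ) 1)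
    (huhat_meas : ∀ s, Measurable[ℱ s] (uhat s))
    (huhat_mem : ∀ s ω, uhat s ω ∈ Set.Icc (0 : ℝ) 1)
    (hξ_meas : ∀ s, 1 ≤ s → Measurable[ℱ s] (ξ s))
    (hξ01 : ∀ s ω, ξ s ω = 0 ∨ ξ s ω = 1)
    (hπ : ∀ s ω, 1 ≤ s → π s ω =
      Set.indicator {ω' | uhat (s - 1) ω' ≤ U s ω'} (fun _ => (1 : ℝ)) ω
        + ρ s * Set.indicator {ω' | U s ω' < uhat (s - 1) ω'} (fun _ => (1 : ℝ)) ω)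
    (hξcond : ∀ s, 1 ≤ s →
      μ[ξ s | (ℱ (s - 1) : MeasurableSpace Ω)
          ⊔ MeasurableSpace.comap (l s) Real.measurableSpace
          ⊔ MeasurableSpace.comap (U s) Real.measurableSpace] =ᵐ[μ] π s)
    (hident : ∀ s t : ℕ, 1 ≤ s → 1 ≤ t →
      IdentDistrib (fun ω => (l s ω, U s ω)) (fun ω => (l t ω, U t ω)) μ μ)
    (hindep : iIndepFun
      (fun s ω => (l (s + 1) ω, U (s + 1) ω)) μ)
    (hindep_past : ∀ s, 1 ≤ s →
      Indep (MeasurableSpace.comap (fun ω => (l s ω, U s ω))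
        (inferInstance : MeasurableSpace (ℝ × ℝ))) (ℱ (s - 1)) μ)
    -- fix u and suppose the null hypothesis H_{0,u} : R(u) > ε holds
    (u : ℝ) (hu : u ∈ Set.Icc (0 : ℝ) 1)
    (R : ℝ) (hRdef : R = (1 - ρdeploy) *
      ∫ ω, l 1 ω * Set.indicator {ω' | U 1 ω' < u} (fun _ => (1 : ℝ)) ω ∂μ)
    (hnull : ε < R)
    (Z D : ℕ → Ω → ℝ)
    (hZ : ∀ s ω, 1 ≤ s → Z s ω = (1 - ρmin) * l s ω * ξ s ω *
      Set.indicator {ω' | U s ω' < u} (fun _ => (1 : ℝ)) ω / π s ω)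
    (hD : ∀ s ω, D s ω = ε - Z s ω)
    -- nonnegative, bounded, predictable bets with 1 + λ_t D_t ≥ 0 a.s.
    (lam : ℕ → Ω → ℝ)
    (hlam_meas : ∀ s, 1 ≤ s → Measurable[ℱ (s - 1)] (lam s))
    (hlam_nonneg : ∀ s ω, 0 ≤ lam s ω)
    (hlam_bdd : ∀ s, ∃ C : ℝ, ∀ ω, lam s ω ≤ C)
    (hconstr : ∀ s, 1 ≤ s → ∀ᵐ ω ∂μ, 0 ≤ 1 + lam s ω * D s ω)
    (K : ℕ → Ω → ℝ)
    (hK0 : ∀ ω, K 0 ω = 1)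
    (hK : ∀ s, 1 ≤ s → ∀ ω, K s ω = K (s - 1) ω * (1 + lam s ω * D s ω)) :
    Supermartingale K ℱ μ ∧ ∀ s : ℕ, ∀ᵐ ω ∂μ, 0 ≤ K s ω := by
  obtain ⟨hε0, hε1⟩ := hε
  have hρd1 : ρdeploy < 1 := lt_of_le_of_lt hρdw hρw
  have hone : ∀ n : ℕ, 1 ≤ n + 1 := fun n => Nat.le_add_left 1 n
  -- bounds on π
  have hπ_bound : ∀ s, 1 ≤ s → ∀ ω, ρdeploy ≤ π s ω ∧ π s ω ≤ 1 := by
    intro s hs ω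
    rw [hπ s ω hs]
    simp only [Set.indicator_apply, Set.mem_setOf_eq]
    by_cases h : uhat (s - 1) ω ≤ U s ω
    · rw [if_pos h, if_neg (not_lt.mpr h)]
      constructor <;> [linarith; linarith]
    · rw [if_neg h, if_pos (lt_of_not_ge h), hρ s]
      split_ifs <;> constructor <;> linarith
  have hπ_pos : ∀ s, 1 ≤ s → ∀ ω, 0 < π s ω :=
    fun s hs ω => lt_of_lt_of_le hρd (hπ_bound s hs ω).1
  have hρmin0 : 0 ≤ 1 - ρmin := by rw [hρmin]; linarith
  have hρmin1 : 1 - ρmin ≤ 1 := by rw [hρmin]; linarith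
  have hind01 : ∀ (S : Set Ω) (ω : Ω),
      0 ≤ Set.indicator S (fun _ => (1 : ℝ)) ω ∧ Set.indicator S (fun _ => (1 : ℝ)) ω ≤ 1 := by
    intro S ω
    by_cases h : ω ∈ S
    · rw [Set.indicator_of_mem h]; norm_num
    · rw [Set.indicator_of_notMem h]; norm_num
  -- bounds on Z
  have hZ_bound : ∀ s, 1 ≤ s → ∀ ω, 0 ≤ Z s ω ∧ Z s ω ≤ 1 / ρdeploy := by
    intro s hs ω
    rw [hZ s ω hs]
    have hl := hl_mem s ω hs
    have hξb : 0 ≤ ξ s ω ∧ ξ s ω ≤ 1 := by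
      rcases hξ01 s ω with h | h <;> rw [h] <;> norm_num
    have hib := hind01 {ω' | U s ω' < u} ω
    have hN0 : 0 ≤ (1 - ρmin) * l s ω * ξ s ω *
        Set.indicator {ω' | U s ω' < u} (fun _ => (1 : ℝ)) ω :=
      mul_nonneg (mul_nonneg (mul_nonneg hρmin0 hl.1) hξb.1) hib.1
    have hN1 : (1 - ρmin) * l s ω * ξ s ω *
        Set.indicator {ω' | U s ω' < u} (fun _ => (1 : ℝ)) ω ≤ 1 := by
      calc (1 - ρmin) * l s ω * ξ s ω * Set.indicator {ω' | U s ω' < u} (fun _ => (1 : ℝ)) ω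
          ≤ 1 * 1 * 1 * 1 := by
            apply mul_le_mul (mul_le_mul (mul_le_mul hρmin1 hl.2 hl.1 (by norm_num))
              hξb.2 hξb.1 (by positivity)) hib.2 hib.1 (by norm_num)
        _ = 1 := by norm_num
    refine ⟨div_nonneg hN0 (le_of_lt (hπ_pos s hs ω)), ?_⟩
    exact div_le_div₀ (by norm_num) hN1 hρd (hπ_bound s hs ω).1
  -- bounds on D
  have hD_bound : ∀ s, 1 ≤ s → ∀ ω, |D s ω| ≤ ε + 1 / ρdeploy := by
    intro s hs ω
    have hZb := hZ_bound s hs ω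
    rw [hD s ω]
    have h0 : (0:ℝ) ≤ 1 / ρdeploy := by positivity
    rw [abs_le]; constructor <;> linarith
  -- measurability
  have huhat_prev : ∀ s : ℕ, Measurable[ℱ s] (uhat (s - 1)) :=
    fun s => (huhat_meas (s - 1)).mono (ℱ.mono (Nat.sub_le s 1)) le_rfl
  have hπ_meas : ∀ s, 1 ≤ s → Measurable[ℱ s] (π s) := by
    intro s hs
    have hfun : π s = fun ω => Set.indicator {ω' | uhat (s - 1) ω' ≤ U s ω'} (fun _ => (1 : ℝ)) ω
        + ρ s * Set.indicator {ω' | U s ω' < uhat (s - 1) ω'} (fun _ => (1 : ℝ)) ω :=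
      funext fun ω => hπ s ω hs
    rw [hfun]
    have h1 : MeasurableSet[ℱ s] {ω' | uhat (s - 1) ω' ≤ U s ω'} :=
      measurableSet_le (huhat_prev s) (hU_meas s hs)
    have h2 : MeasurableSet[ℱ s] {ω' | U s ω' < uhat (s - 1) ω'} :=
      measurableSet_lt (hU_meas s hs) (huhat_prev s)
    exact (measurable_const.indicator h1).add
      (measurable_const.mul (measurable_const.indicator h2))
  have hZ_meas : ∀ s, 1 ≤ s → Measurable[ℱ s] (Z s) := by
    intro s hs
    have hfun : Z s = fun ω => (1 - ρmin) * l s ω * ξ s ω *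
        Set.indicator {ω' | U s ω' < u} (fun _ => (1 : ℝ)) ω / π s ω :=
      funext fun ω => hZ s ω hs
    rw [hfun]
    have hind : MeasurableSet[ℱ s] {ω' | U s ω' < u} :=
      measurableSet_lt (hU_meas s hs) measurable_const
    exact (((measurable_const.mul (hl_meas s hs)).mul (hξ_meas s hs)).mul
      (measurable_const.indicator hind)).div (hπ_meas s hs)
  have hD_meas : ∀ s, 1 ≤ s → Measurable[ℱ s] (D s) := by
    intro s hs
    have hfun : D s = fun ω => ε - Z s ω := funext fun ω => hD s ω
    rw [hfun]
    exact measurable_const.sub (hZ_meas s hs)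
  -- K adapted
  have hK_adapted : ∀ s, Measurable[ℱ s] (K s) := by
    intro s
    induction s with
    | zero =>
      have : K 0 = fun _ => (1 : ℝ) := funext hK0
      rw [this]; exact measurable_const
    | succ n ih =>
      have hfun : K (n + 1) = fun ω => K n ω * (1 + lam (n + 1) ω * D (n + 1) ω) :=
        funext fun ω => hK (n + 1) (hone n) ω
      rw [hfun]
      exact (ih.mono (ℱ.mono (Nat.le_succ n)) le_rfl).mul (measurable_const.add
        (((hlam_meas (n + 1) (hone n)).mono (ℱ.mono (Nat.le_succ n)) le_rfl).mul
          (hD_meas (n + 1) (hone n))))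
  -- K bounded
  have hK_bdd : ∀ s, ∃ C : ℝ, ∀ ω, |K s ω| ≤ C := by
    intro s
    induction s with
    | zero => exact ⟨1, fun ω => by rw [hK0]; norm_num⟩
    | succ n ih =>
      obtain ⟨C, hC⟩ := ih
      obtain ⟨Cl, hCl⟩ := hlam_bdd (n + 1)
      refine ⟨C * (1 + max Cl 0 * (ε + 1 / ρdeploy)), fun ω => ?_⟩
      rw [hK (n + 1) (hone n) ω, abs_mul]
      have h2 : |1 + lam (n + 1) ω * D (n + 1) ω| ≤ 1 + max Cl 0 * (ε + 1 / ρdeploy) := by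
        calc |1 + lam (n + 1) ω * D (n + 1) ω|
            ≤ |(1:ℝ)| + |lam (n + 1) ω * D (n + 1) ω| := abs_add_le _ _
          _ ≤ 1 + max Cl 0 * (ε + 1 / ρdeploy) := by
              rw [abs_one, abs_mul, abs_of_nonneg (hlam_nonneg (n + 1) ω)]
              have := mul_le_mul (le_trans (hCl ω) (le_max_left Cl 0))
                (hD_bound (n + 1) (hone n) ω) (abs_nonneg _) (le_max_right Cl 0)
              linarith
      exact mul_le_mul (hC ω) h2 (abs_nonneg _) (le_trans (abs_nonneg _) (hC ω))
  -- integrability helper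
  have hbdd_int : ∀ (f : Ω → ℝ), Measurable f → (∃ C, ∀ ω, |f ω| ≤ C) → Integrable f μ := by
    rintro f hf ⟨C, hC⟩
    exact (integrable_const C).mono' hf.aestronglyMeasurable
      (Filter.Eventually.of_forall fun ω => by simpa [Real.norm_eq_abs] using hC ω)
  have hK_int : ∀ s, Integrable (K s) μ :=
    fun s => hbdd_int (K s) ((hK_adapted s).mono (ℱ.le s) le_rfl) (hK_bdd s)
  have hZ_int : ∀ s, 1 ≤ s → Integrable (Z s) μ := by
    intro s hs
    refine hbdd_int (Z s) ((hZ_meas s hs).mono (ℱ.le s) le_rfl) ⟨1 / ρdeploy, fun ω => ?_⟩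
    have h := hZ_bound s hs ω
    rw [abs_of_nonneg h.1]; exact h.2
  have hD_int : ∀ s, 1 ≤ s → Integrable (D s) μ := by
    intro s hs
    exact hbdd_int (D s) ((hD_meas s hs).mono (ℱ.le s) le_rfl)
      ⟨ε + 1 / ρdeploy, hD_bound s hs⟩
  -- nonnegativity
  have hK_nonneg : ∀ s : ℕ, ∀ᵐ ω ∂μ, 0 ≤ K s ω := by
    intro s
    induction s with
    | zero => exact Filter.Eventually.of_forall fun ω => by rw [hK0]; norm_num
    | succ n ih =>
      filter_upwards [ih, hconstr (n + 1) (hone n)] with ω h1 h2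
      rw [hK (n + 1) (hone n) ω]
      exact mul_nonneg h1 h2
  -- the key conditional expectation computation:  μ[Z (i+1) | ℱ i] =ᵐ R
  have hZR : ∀ i : ℕ, μ[Z (i + 1) | (ℱ i : MeasurableSpace Ω)] =ᵐ[μ] fun _ => R := by
    intro i
    have hs : 1 ≤ i + 1 := hone i
    set s := i + 1 with hsdef
    -- the integral of the "target" function equals R
    have hint_eq : ∫ ω, (1 - ρmin) * l s ω * (if U s ω < u then (1:ℝ) else 0) ∂μ = R := by
      have hφ2 : Measurable (fun p : ℝ × ℝ => p.1 * (if p.2 < u then (1:ℝ) else 0)) :=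
        measurable_fst.mul (Measurable.ite (measurableSet_lt measurable_snd measurable_const)
          measurable_const measurable_const)
      have hid := ((hident s 1 hs le_rfl).comp hφ2).integral_eq
      simp_rw [mul_assoc, integral_const_mul]
      rw [hRdef, ← hρmin]
      have hid' : (∫ a : Ω, l s a * (if U s a < u then (1:ℝ) else 0) ∂μ)
          = ∫ a : Ω, l 1 a * (if U 1 a < u then (1:ℝ) else 0) ∂μ := hid
      rw [hid']
      have hind' : ∀ a : Ω, l 1 a * (if U 1 a < u then (1:ℝ) else 0)
          = l 1 a * Set.indicator {ω' | U 1 ω' < u} (fun _ => (1:ℝ)) a := by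
        intro a; rw [Set.indicator_apply]; simp [Set.mem_setOf_eq]
      rw [integral_congr_ae (Filter.Eventually.of_forall hind')]
    -- the independence step (stated at the m0 level)
    have hφ : Measurable (fun p : ℝ × ℝ => (1 - ρmin) * p.1 * (if p.2 < u then (1:ℝ) else 0)) :=
      (measurable_const.mul measurable_fst).mul
        (Measurable.ite (measurableSet_lt measurable_snd measurable_const)
          measurable_const measurable_const)
    have hpair_le : MeasurableSpace.comap (fun ω => (l s ω, U s ω))
        (inferInstance : MeasurableSpace (ℝ × ℝ)) ≤ m0 :=
      (measurable_iff_comap_le.mp ((hl_meas s hs).prodMk (hU_meas s hs))).trans (ℱ.le s)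
    have hh_sm : StronglyMeasurable[MeasurableSpace.comap (fun ω => (l s ω, U s ω))
        (inferInstance : MeasurableSpace (ℝ × ℝ))]
        (fun ω => (1 - ρmin) * l s ω * (if U s ω < u then (1:ℝ) else 0)) := by
      have hpm : Measurable[MeasurableSpace.comap (fun ω => (l s ω, U s ω))
          (inferInstance : MeasurableSpace (ℝ × ℝ))] (fun ω => (l s ω, U s ω)) :=
        measurable_iff_comap_le.mpr le_rfl
      exact (hφ.comp hpm).stronglyMeasurable
    have hindepi : Indep (MeasurableSpace.comap (fun ω => (l s ω, U s ω))
        (inferInstance : MeasurableSpace (ℝ × ℝ))) (ℱ i) μ := hindep_past s hs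
    have hindep_eq : μ[fun ω => (1 - ρmin) * l s ω * (if U s ω < u then (1:ℝ) else 0)
        | (ℱ i : MeasurableSpace Ω)] =ᵐ[μ] fun _ => R := by
      refine (condExp_indep_eq hpair_le (ℱ.le i) hh_sm hindepi).trans ?_
      rw [hint_eq]
    -- integrability facts needed below
    have hξ_int : Integrable (ξ s) μ := by
      refine hbdd_int (ξ s) ((hξ_meas s hs).mono (ℱ.le s) le_rfl) ⟨1, fun ω => ?_⟩
      rcases hξ01 s ω with h | h <;> rw [h] <;> norm_num
    -- now move to the intermediate σ-algebra m'
    set m' : MeasurableSpace Ω := (ℱ i : MeasurableSpace Ω)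
        ⊔ MeasurableSpace.comap (l s) Real.measurableSpace
        ⊔ MeasurableSpace.comap (U s) Real.measurableSpace with hm'def
    have hm'le : m' ≤ m0 := by
      apply sup_le (sup_le (ℱ.le i) _) _
      · exact (measurable_iff_comap_le.mp (hl_meas s hs)).trans (ℱ.le s)
      · exact (measurable_iff_comap_le.mp (hU_meas s hs)).trans (ℱ.le s)
    have hFle : (ℱ i : MeasurableSpace Ω) ≤ m' := le_sup_of_le_left le_sup_left
    have hl_m' : Measurable[m'] (l s) :=
      measurable_iff_comap_le.mpr (le_sup_of_le_left le_sup_right)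
    have hU_m' : Measurable[m'] (U s) := measurable_iff_comap_le.mpr le_sup_right
    have huhat_m' : Measurable[m'] (uhat i) := (huhat_meas i).mono hFle le_rfl
    have hπ_m' : Measurable[m'] (π s) := by
      have hfun : π s = fun ω => Set.indicator {ω' | uhat (s - 1) ω' ≤ U s ω'} (fun _ => (1 : ℝ)) ω
          + ρ s * Set.indicator {ω' | U s ω' < uhat (s - 1) ω'} (fun _ => (1 : ℝ)) ω :=
        funext fun ω => hπ s ω hs
      rw [hfun]
      have h1 : MeasurableSet[m'] {ω' | uhat (s - 1) ω' ≤ U s ω'} :=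
        measurableSet_le huhat_m' hU_m'
      have h2 : MeasurableSet[m'] {ω' | U s ω' < uhat (s - 1) ω'} :=
        measurableSet_lt hU_m' huhat_m'
      exact (measurable_const.indicator h1).add
        (measurable_const.mul (measurable_const.indicator h2))
    set g : Ω → ℝ := fun ω => (1 - ρmin) * l s ω *
        Set.indicator {ω' | U s ω' < u} (fun _ => (1 : ℝ)) ω / π s ω with hgdef
    have hg_m' : Measurable[m'] g := by
      have hind : MeasurableSet[m'] {ω' | U s ω' < u} :=
        measurableSet_lt hU_m' measurable_const
      exact ((measurable_const.mul hl_m').mul (measurable_const.indicator hind)).div hπ_m'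
    have hZeq : Z s = g * ξ s := by
      funext ω
      rw [hZ s ω hs]
      show _ = g ω * ξ s ω
      rw [hgdef]
      ring
    have hgξ_int : Integrable (g * ξ s) μ := by
      rw [← hZeq]; exact hZ_int s hs
    have hξc : μ[ξ s | m'] =ᵐ[μ] π s := hξcond s hs
    have step1 : μ[g * ξ s | m'] =ᵐ[μ] g * μ[ξ s | m'] :=
      condExp_mul_of_stronglyMeasurable_left hg_m'.stronglyMeasurable hgξ_int hξ_int
    have step2 : μ[Z s | m'] =ᵐ[μ] fun ω => (1 - ρmin) * l s ω *
        (if U s ω < u then (1:ℝ) else 0) := by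
      rw [hZeq]
      refine step1.trans ?_
      filter_upwards [hξc] with ω h2
      show g ω * (μ[ξ s | m']) ω = _
      rw [h2, hgdef]
      have hπ0 : π s ω ≠ 0 := ne_of_gt (hπ_pos s hs ω)
      show (1 - ρmin) * l s ω * Set.indicator {ω' | U s ω' < u} (fun _ => (1 : ℝ)) ω
          / π s ω * π s ω = _
      rw [div_mul_cancel₀ _ hπ0, Set.indicator_apply]
      simp [Set.mem_setOf_eq]
    have tower : μ[Z s | (ℱ i : MeasurableSpace Ω)] =ᵐ[μ]
        μ[fun ω => (1 - ρmin) * l s ω * (if U s ω < u then (1:ℝ) else 0)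
          | (ℱ i : MeasurableSpace Ω)] :=
      (condExp_condExp_of_le hFle hm'le).symm.trans (condExp_congr_ae step2)
    exact tower.trans hindep_eq
  -- conditional expectation of D
  have hDR : ∀ i : ℕ, μ[D (i + 1) | (ℱ i : MeasurableSpace Ω)] =ᵐ[μ] fun _ => ε - R := by
    intro i
    have hs : 1 ≤ i + 1 := hone i
    have hDeq : D (i + 1) = (fun _ => ε) - Z (i + 1) := funext fun ω => hD (i + 1) ω
    rw [hDeq]
    refine (condExp_sub (integrable_const ε) (hZ_int (i + 1) hs) _).trans ?_
    filter_upwards [hZR i] with ω h1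
    show (μ[fun _ => ε | (ℱ i : MeasurableSpace Ω)]) ω - _ = _
    rw [condExp_const (ℱ.le i), h1]
  -- the supermartingale inequality
  have key : ∀ i : ℕ, μ[K (i + 1) | (ℱ i : MeasurableSpace Ω)] ≤ᵐ[μ] K i := by
    intro i
    have hs : 1 ≤ i + 1 := hone i
    set c : Ω → ℝ := fun ω => K i ω * lam (i + 1) ω with hcdef
    have hc_meas : Measurable[ℱ i] c := (hK_adapted i).mul (hlam_meas (i + 1) hs)
    obtain ⟨CK, hCK⟩ := hK_bdd i
    obtain ⟨Cl, hCl⟩ := hlam_bdd (i + 1)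
    have hc_bdd : ∀ ω, |c ω| ≤ CK * max Cl 0 := by
      intro ω
      show |K i ω * lam (i + 1) ω| ≤ _
      rw [abs_mul, abs_of_nonneg (hlam_nonneg (i + 1) ω)]
      exact mul_le_mul (hCK ω) (le_trans (hCl ω) (le_max_left Cl 0))
        (hlam_nonneg (i + 1) ω) (le_trans (abs_nonneg _) (hCK ω))
    have hc_int : Integrable c μ :=
      hbdd_int c (hc_meas.mono (ℱ.le i) le_rfl) ⟨CK * max Cl 0, hc_bdd⟩
    have hcd_int : Integrable (c * D (i + 1)) μ := by
      refine hbdd_int _ ((hc_meas.mono (ℱ.le i) le_rfl).mul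
        ((hD_meas (i + 1) hs).mono (ℱ.le (i + 1)) le_rfl))
        ⟨CK * max Cl 0 * (ε + 1 / ρdeploy), fun ω => ?_⟩
      show |c ω * D (i + 1) ω| ≤ _
      rw [abs_mul]
      exact mul_le_mul (hc_bdd ω) (hD_bound (i + 1) hs ω) (abs_nonneg _)
        (le_trans (abs_nonneg _) (hc_bdd ω))
    have hKs_eq : K (i + 1) = K i + c * D (i + 1) := by
      funext ω
      show K (i + 1) ω = K i ω + K i ω * lam (i + 1) ω * D (i + 1) ω
      rw [hK (i + 1) hs ω]
      simp only [Nat.add_sub_cancel]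
      ring
    have e1 : μ[K (i + 1) | (ℱ i : MeasurableSpace Ω)] =ᵐ[μ]
        μ[K i | (ℱ i : MeasurableSpace Ω)] + μ[c * D (i + 1) | (ℱ i : MeasurableSpace Ω)] := by
      rw [hKs_eq]
      exact condExp_add (hK_int i) hcd_int _
    have e2 : μ[K i | (ℱ i : MeasurableSpace Ω)] = K i :=
      condExp_of_stronglyMeasurable (ℱ.le i) (hK_adapted i).stronglyMeasurable (hK_int i)
    have e3 : μ[c * D (i + 1) | (ℱ i : MeasurableSpace Ω)] =ᵐ[μ] fun ω => c ω * (ε - R) := by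
      refine (condExp_mul_of_stronglyMeasurable_left hc_meas.stronglyMeasurable hcd_int
        (hD_int (i + 1) hs)).trans ?_
      filter_upwards [hDR i] with ω h1
      show c ω * (μ[D (i + 1) | (ℱ i : MeasurableSpace Ω)]) ω = _
      rw [h1]
    have hc_nonneg : ∀ᵐ ω ∂μ, 0 ≤ c ω := by
      filter_upwards [hK_nonneg i] with ω h1
      exact mul_nonneg h1 (hlam_nonneg (i + 1) ω)
    filter_upwards [e1, e3, hc_nonneg] with ω h1 h3 h4
    rw [h1]
    show (μ[K i | (ℱ i : MeasurableSpace Ω)]) ω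
      + (μ[c * D (i + 1) | (ℱ i : MeasurableSpace Ω)]) ω ≤ K i ω
    rw [e2, h3]
    have : c ω * (ε - R) ≤ 0 := mul_nonpos_of_nonneg_of_nonpos h4 (by linarith)
    linarith
  exact ⟨supermartingale_nat (fun i => (hK_adapted i).stronglyMeasurable) hK_int key, hK_nonneg⟩
end

section
/- (Safety of IPS+Hoeff) Suppose the pairs (l_t, U_t), t ≥ 1, are i.i.d., (l_t, U_t) is independent of F_{t-1} for every t, and ρ_t ≡ ρ ∈ (0,1) is fixed. Let M̃ = (1 − ρ)/ρ, α_t = 6α/(π²·t²), let U be a finite subset of [0,1] of cardinality N, and define û_t = max{ u ∈ U : (1/t)·Σ_{i=1}^t Z_i(u) + M̃·√( log(N/α_t)/(2t) ) ≤ ε }, with û_t = 0 if this set is empty. Assume that for each fixed u ∈ U the random variables Z_1(u), Z_2(u), … take values in [0, M̃] and satisfy E[Z_i(u) | F_{i-1}] = R(u) almost surely, where R(u) = (1 − ρ)·E[l_1·1{U_1 < u}]. Then P( there exists t ≥ 1 with R(û_t) > ε ) ≤ α. -/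
open MeasureTheory ProbabilityTheory
open scoped Classical

section Auxiliary

open Real


lemma hoeffding_scalar (p h : ℝ) (hp0 : 0 ≤ p) (hp1 : p ≤ 1) :
    (1 - p) * Real.exp (-p * h) + p * Real.exp ((1 - p) * h) ≤ Real.exp (h ^ 2 / 8) := by
  set D : ℝ → ℝ := fun x => 1 - p + p * Real.exp x with hDdef
  have hD : ∀ x, 0 < D x := by
    intro x
    show 0 < 1 - p + p * Real.exp x
    rcases le_or_gt (Real.exp x) 1 with hx | hx
    · nlinarith [Real.exp_pos x]
    · nlinarith [Real.exp_pos x]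
  -- rewrite LHS as exp(-p*h) * D h = exp (-p*h + log (D h))
  have hLHS : (1 - p) * Real.exp (-p * h) + p * Real.exp ((1 - p) * h)
      = Real.exp (-p * h + Real.log (D h)) := by
    rw [Real.exp_add, Real.exp_log (hD h)]
    have : (1 - p) * h = -p * h + h := by ring
    rw [this, Real.exp_add]
    ring
  rw [hLHS, Real.exp_le_exp]
  -- suffices : -p*h + log (D h) ≤ h^2/8, i.e. 0 ≤ φ h where
  set φ : ℝ → ℝ := fun x => x ^ 2 / 8 + p * x - Real.log (D x) with hφdef
  set ψ : ℝ → ℝ := fun x => x / 4 + p - p * Real.exp x / D x with hψdef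
  have hD' : ∀ x, HasDerivAt D (p * Real.exp x) x := fun x =>
    ((Real.hasDerivAt_exp x).const_mul p).const_add (1 - p)
  have hφ' : ∀ x, HasDerivAt φ (ψ x) x := by
    intro x
    have h1 : HasDerivAt (fun x : ℝ => x ^ 2 / 8) (x / 4) x := by
      have := (hasDerivAt_pow 2 x).div_const 8
      refine this.congr_deriv ?_; rw [show (2:ℕ) - 1 = 1 from rfl]; ring
    have h2 : HasDerivAt (fun x : ℝ => p * x) p x := by
      simpa using (hasDerivAt_id x).const_mul p
    have h3 : HasDerivAt (fun x => Real.log (D x)) (p * Real.exp x / D x) x :=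
      (hD' x).log (hD x).ne'
    exact (h1.add h2).sub h3
  have hψ' : ∀ x, HasDerivAt ψ (1 / 4 - (p * Real.exp x * (1 - p)) / (D x) ^ 2) x := by
    intro x
    have h1 : HasDerivAt (fun x : ℝ => x / 4 + p) (1 / 4) x := by
      simpa using (hasDerivAt_id x).div_const 4 |>.add_const p
    have h2 : HasDerivAt (fun x => p * Real.exp x / D x)
        ((p * Real.exp x * D x - p * Real.exp x * (p * Real.exp x)) / (D x) ^ 2) x :=
      ((Real.hasDerivAt_exp x).const_mul p).div (hD' x) (hD x).ne'
    have := h1.sub h2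
    refine this.congr_deriv ?_
    have hDx : D x = 1 - p + p * Real.exp x := rfl
    rw [hDx]
    ring
  have hψmono : Monotone ψ := by
    refine monotone_of_deriv_nonneg (fun x => (hψ' x).differentiableAt) (fun x => ?_)
    rw [(hψ' x).deriv]
    rw [sub_nonneg, div_le_iff₀ (pow_pos (hD x) 2)]
    have hDx : D x = 1 - p + p * Real.exp x := rfl
    rw [hDx]
    nlinarith [Real.exp_pos x, sq_nonneg ((1 - p) - p * Real.exp x)]
  have hψ0 : ψ 0 = 0 := by
    simp [hψdef, hDdef]
  have hφ0 : φ 0 = 0 := by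
    simp [hφdef, hDdef]
  have key : 0 ≤ φ h := by
    rcases le_total 0 h with hh | hh
    · have hmono : MonotoneOn φ (Set.Ici 0) := by
        refine monotoneOn_of_deriv_nonneg (convex_Ici 0)
          (fun x _ => ((hφ' x).differentiableAt).continuousAt.continuousWithinAt)
          (fun x _ => ((hφ' x).differentiableAt).differentiableWithinAt) (fun x hx => ?_)
        rw [(hφ' x).deriv]
        rw [interior_Ici] at hx
        calc (0:ℝ) = ψ 0 := hψ0.symm
        _ ≤ ψ x := hψmono (le_of_lt hx)
      have := hmono (Set.self_mem_Ici) (Set.mem_Ici.2 hh) hh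
      rwa [hφ0] at this
    · have hanti : AntitoneOn φ (Set.Iic 0) := by
        refine antitoneOn_of_deriv_nonpos (convex_Iic 0)
          (fun x _ => ((hφ' x).differentiableAt).continuousAt.continuousWithinAt)
          (fun x _ => ((hφ' x).differentiableAt).differentiableWithinAt) (fun x hx => ?_)
        rw [(hφ' x).deriv]
        rw [interior_Iic] at hx
        calc ψ x ≤ ψ 0 := hψmono (le_of_lt hx)
        _ = 0 := hψ0
      have := hanti (Set.mem_Iic.2 hh) (Set.self_mem_Iic) hh
      rwa [hφ0] at this
  have key' : 0 ≤ h ^ 2 / 8 + p * h - Real.log (D h) := key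
  linarith

lemma condexp_exp_hoeffding {Ω : Type*} {m m0 : MeasurableSpace Ω} {μ : Measure Ω}
    [IsProbabilityMeasure μ] (hm : m ≤ m0) {M r lam : ℝ} (hM : 0 < M) {Y : Ω → ℝ}
    (hmeas : AEStronglyMeasurable Y μ)
    (hrange : ∀ ω, Y ω ∈ Set.Icc 0 M)
    (hcond : μ[Y | m] =ᵐ[μ] fun _ => r) :
    μ[fun ω => Real.exp (lam * (Y ω - r)) | m] ≤ᵐ[μ]
      fun _ => Real.exp (lam ^ 2 * M ^ 2 / 8) := by
  have hYbd : ∀ ω, ‖Y ω‖ ≤ M := fun ω => by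
    rw [Real.norm_eq_abs, abs_le]; exact ⟨by linarith [(hrange ω).1], (hrange ω).2⟩
  have hYint : Integrable Y μ := (integrable_const M).mono' hmeas (ae_of_all _ hYbd)
  have hr : r ∈ Set.Icc 0 M := by
    have h1 : ∫ ω, (μ[Y | m]) ω ∂μ = ∫ ω, Y ω ∂μ := integral_condExp hm
    have h2 : ∫ ω, (μ[Y | m]) ω ∂μ = r := by
      rw [integral_congr_ae hcond]; simp
    have h3 : ∫ ω, Y ω ∂μ = r := by rw [← h1, h2]
    constructor
    · rw [← h3]; exact integral_nonneg fun ω => (hrange ω).1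
    · rw [← h3]
      calc ∫ ω, Y ω ∂μ ≤ ∫ _, M ∂μ := integral_mono hYint (integrable_const M)
            (fun ω => (hrange ω).2)
        _ = M := by simp
  set p : ℝ := r / M with hp
  have hp0 : 0 ≤ p := div_nonneg hr.1 hM.le
  have hp1 : p ≤ 1 := (div_le_one hM).2 hr.2
  set Ea : ℝ := Real.exp (lam * (0 - r)) with hEa
  set Eb : ℝ := Real.exp (lam * (M - r)) with hEb
  -- pointwise convexity bound
  have hconv : ∀ ω, Real.exp (lam * (Y ω - r)) ≤ Ea + (Eb - Ea) / M * Y ω := by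
    intro ω
    obtain ⟨hy0, hyM⟩ := hrange ω
    have hw1 : 0 ≤ (M - Y ω) / M := div_nonneg (by linarith) hM.le
    have hw2 : 0 ≤ Y ω / M := div_nonneg hy0 hM.le
    have hw : (M - Y ω) / M + Y ω / M = 1 := by field_simp; ring
    have := convexOn_exp.2 (Set.mem_univ (lam * (0 - r))) (Set.mem_univ (lam * (M - r)))
      hw1 hw2 hw
    simp only [smul_eq_mul] at this
    have harg : (M - Y ω) / M * (lam * (0 - r)) + Y ω / M * (lam * (M - r))
        = lam * (Y ω - r) := by field_simp; ring
    rw [harg] at this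
    refine this.trans (le_of_eq ?_)
    rw [hEa, hEb]; field_simp; ring
  -- integrability of the exponential
  have hexp_meas : AEStronglyMeasurable (fun ω => Real.exp (lam * (Y ω - r))) μ :=
    Real.continuous_exp.comp_aestronglyMeasurable
      ((hmeas.sub aestronglyMeasurable_const).const_mul lam)
  have hexp_bd : ∀ ω, ‖Real.exp (lam * (Y ω - r))‖ ≤ Real.exp (|lam| * M) := by
    intro ω
    rw [Real.norm_eq_abs, Real.abs_exp, Real.exp_le_exp]
    obtain ⟨hy0, hyM⟩ := hrange ω
    calc lam * (Y ω - r) ≤ |lam * (Y ω - r)| := le_abs_self _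
      _ = |lam| * |Y ω - r| := abs_mul _ _
      _ ≤ |lam| * M := by
          refine mul_le_mul_of_nonneg_left ?_ (abs_nonneg lam)
          rw [abs_le]; constructor <;> [linarith [hr.2]; linarith [hr.1]]
  have hexp_int : Integrable (fun ω => Real.exp (lam * (Y ω - r))) μ :=
    (integrable_const _).mono' hexp_meas (ae_of_all _ hexp_bd)
  have hg_int : Integrable (fun ω => Ea + (Eb - Ea) / M * Y ω) μ :=
    (integrable_const Ea).add (hYint.const_mul _)
  -- condexp monotonicity
  have hmono := condExp_mono (μ := μ) (m := m) hexp_int hg_int (ae_of_all _ hconv)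
  -- compute condexp of the affine function
  have hcalc : μ[fun ω => Ea + (Eb - Ea) / M * Y ω | m] =ᵐ[μ]
      fun _ => Ea + (Eb - Ea) / M * r := by
    have h1 := condExp_add (μ := μ) (m := m) (integrable_const Ea) (hYint.const_mul ((Eb - Ea) / M))
    have h2 : μ[fun _ => Ea | m] = fun _ => Ea := condExp_const hm Ea
    have h3 : μ[fun ω => (Eb - Ea) / M * Y ω | m] =ᵐ[μ] fun ω => (Eb - Ea) / M * (μ[Y | m]) ω := by
      have := condExp_smul (μ := μ) (m := m) ((Eb - Ea) / M) Y
      exact this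
    rw [show (fun ω => Ea + (Eb - Ea) / M * Y ω)
        = ((fun _ => Ea) + fun ω => (Eb - Ea) / M * Y ω) from rfl]
    filter_upwards [h1, h3, hcond] with ω w1 w3 wc
    simp only [Pi.add_apply] at w1
    rw [w1, h2, w3, wc]
  have hfinal : Ea + (Eb - Ea) / M * r ≤ Real.exp (lam ^ 2 * M ^ 2 / 8) := by
    have key := hoeffding_scalar p (lam * M) hp0 hp1
    have e1 : -p * (lam * M) = lam * (0 - r) := by
      rw [hp]; field_simp; ring
    have e2 : (1 - p) * (lam * M) = lam * (M - r) := by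
      rw [hp]; field_simp
    have e3 : (lam * M) ^ 2 / 8 = lam ^ 2 * M ^ 2 / 8 := by ring
    rw [e1, e2, e3] at key
    calc Ea + (Eb - Ea) / M * r = (1 - p) * Ea + p * Eb := by
          rw [hp, hEa, hEb]; field_simp; ring
      _ ≤ _ := key
  calc μ[fun ω => Real.exp (lam * (Y ω - r)) | m]
      ≤ᵐ[μ] μ[fun ω => Ea + (Eb - Ea) / M * Y ω | m] := hmono
    _ =ᵐ[μ] fun _ => Ea + (Eb - Ea) / M * r := hcalc
    _ ≤ᵐ[μ] fun _ => Real.exp (lam ^ 2 * M ^ 2 / 8) := ae_of_all _ fun _ => hfinal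

lemma r_mem_of_condexp {Ω : Type*} {m m0 : MeasurableSpace Ω} {μ : Measure Ω}
    [IsProbabilityMeasure μ] (hm : m ≤ m0) {M r : ℝ} {Y : Ω → ℝ}
    (hmeas : AEStronglyMeasurable Y μ)
    (hrange : ∀ ω, Y ω ∈ Set.Icc 0 M)
    (hcond : μ[Y | m] =ᵐ[μ] fun _ => r) : r ∈ Set.Icc 0 M := by
  have hYbd : ∀ ω, ‖Y ω‖ ≤ max M 0 := fun ω => by
    rw [Real.norm_eq_abs, abs_le]
    constructor
    · have := (hrange ω).1; have : (0:ℝ) ≤ max M 0 := le_max_right _ _; linarith [(hrange ω).1]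
    · exact le_trans (hrange ω).2 (le_max_left _ _)
  have hYint : Integrable Y μ := (integrable_const (max M 0)).mono' hmeas (ae_of_all _ hYbd)
  have h1 : ∫ ω, (μ[Y | m]) ω ∂μ = ∫ ω, Y ω ∂μ := integral_condExp hm
  have h2 : ∫ ω, (μ[Y | m]) ω ∂μ = r := by rw [integral_congr_ae hcond]; simp
  have h3 : ∫ ω, Y ω ∂μ = r := by rw [← h1, h2]
  constructor
  · rw [← h3]; exact integral_nonneg fun ω => (hrange ω).1
  · rw [← h3]
    calc ∫ ω, Y ω ∂μ ≤ ∫ _, M ∂μ := integral_mono hYint (integrable_const M)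
          (fun ω => (hrange ω).2)
      _ = M := by simp

section Azuma

variable {Ω : Type*} {m0 : MeasurableSpace Ω} {μ : Measure Ω} [IsProbabilityMeasure μ]
  (ℱ : MeasureTheory.Filtration ℕ m0) {M r : ℝ} {Y : ℕ → Ω → ℝ}

lemma azuma_mgf (hM : 0 < M)
    (hadp : ∀ s, 1 ≤ s → StronglyMeasurable[ℱ s] (Y s))
    (hrange : ∀ s, 1 ≤ s → ∀ ω, Y s ω ∈ Set.Icc 0 M)
    (hcond : ∀ s, 1 ≤ s → μ[Y s | ℱ (s - 1)] =ᵐ[μ] fun _ => r)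
    (lam : ℝ) (t : ℕ) :
    ∫ ω, Real.exp (lam * ∑ i ∈ Finset.Icc 1 t, (Y i ω - r)) ∂μ
      ≤ Real.exp (t * (lam ^ 2 * M ^ 2 / 8)) := by
  have hadp0 : ∀ s, 1 ≤ s → StronglyMeasurable[m0] (Y s) :=
    fun s hs => (hadp s hs).mono (ℱ.le s)
  have hr_mem : r ∈ Set.Icc 0 M :=
    r_mem_of_condexp (ℱ.le 0) (hadp0 1 le_rfl).aestronglyMeasurable
      (hrange 1 le_rfl) (hcond 1 le_rfl)
  induction t with
  | zero => simp
  | succ t ih =>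
    have hst : (1:ℕ) ≤ t + 1 := by omega
    have hsub : (t + 1 : ℕ) - 1 = t := by omega
    set S : Ω → ℝ := fun ω => ∑ i ∈ Finset.Icc 1 t, (Y i ω - r) with hS
    set f : Ω → ℝ := fun ω => Real.exp (lam * S ω) with hf
    set g : Ω → ℝ := fun ω => Real.exp (lam * (Y (t+1) ω - r)) with hg
    have hfg : ∀ ω, Real.exp (lam * ∑ i ∈ Finset.Icc 1 (t+1), (Y i ω - r)) = f ω * g ω := by
      intro ω
      rw [show (∑ i ∈ Finset.Icc 1 (t+1), (Y i ω - r)) = S ω + (Y (t+1) ω - r) from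
        Finset.sum_Icc_succ_top hst _, mul_add, Real.exp_add]
    have hfSM : StronglyMeasurable[ℱ t] f := by
      apply Continuous.comp_stronglyMeasurable Real.continuous_exp
      apply StronglyMeasurable.const_mul
      apply Finset.stronglyMeasurable_fun_sum
      intro i hi
      rw [Finset.mem_Icc] at hi
      exact ((hadp i hi.1).mono (ℱ.mono hi.2)).sub stronglyMeasurable_const
    have hfSM0 : StronglyMeasurable[m0] f := hfSM.mono (ℱ.le t)
    have hgSM0 : StronglyMeasurable[m0] g :=
      Continuous.comp_stronglyMeasurable Real.continuous_exp
        (((hadp0 (t+1) hst).sub stronglyMeasurable_const).const_mul lam)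
    have hfpos : ∀ ω, 0 ≤ f ω := fun ω => (Real.exp_pos _).le
    have hfbd : ∀ ω, ‖f ω‖ ≤ Real.exp (|lam| * (t * M)) := by
      intro ω
      rw [Real.norm_eq_abs, Real.abs_exp, Real.exp_le_exp]
      calc lam * S ω ≤ |lam * S ω| := le_abs_self _
        _ = |lam| * |S ω| := abs_mul _ _
        _ ≤ |lam| * (t * M) := by
            refine mul_le_mul_of_nonneg_left ?_ (abs_nonneg lam)
            calc |S ω| ≤ ∑ i ∈ Finset.Icc 1 t, |Y i ω - r| := Finset.abs_sum_le_sum_abs _ _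
              _ ≤ ∑ _i ∈ Finset.Icc 1 t, M := by
                  refine Finset.sum_le_sum fun i hi => ?_
                  rw [Finset.mem_Icc] at hi
                  obtain ⟨h0, h1⟩ := hrange i hi.1 ω
                  rw [abs_le]
                  constructor <;> [linarith [hr_mem.2]; linarith [hr_mem.1]]
              _ ≤ t * M := by
                  rw [Finset.sum_const, Nat.card_Icc, nsmul_eq_mul]
                  simp
    have hgbd : ∀ ω, ‖g ω‖ ≤ Real.exp (|lam| * M) := by
      intro ω
      rw [Real.norm_eq_abs, Real.abs_exp, Real.exp_le_exp]
      calc lam * (Y (t+1) ω - r) ≤ |lam| * |Y (t+1) ω - r| := by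
            rw [← abs_mul]; exact le_abs_self _
        _ ≤ |lam| * M := by
            refine mul_le_mul_of_nonneg_left ?_ (abs_nonneg lam)
            obtain ⟨h0, h1⟩ := hrange (t+1) hst ω
            rw [abs_le]
            constructor <;> [linarith [hr_mem.2]; linarith [hr_mem.1]]
    have hfint : Integrable f μ :=
      (integrable_const _).mono' hfSM0.aestronglyMeasurable (ae_of_all _ hfbd)
    have hgint : Integrable g μ :=
      (integrable_const _).mono' hgSM0.aestronglyMeasurable (ae_of_all _ hgbd)
    have hfgint : Integrable (f * g) μ := by
      refine (integrable_const (Real.exp (|lam| * (t * M)) * Real.exp (|lam| * M))).mono'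
        (hfSM0.mul hgSM0).aestronglyMeasurable (ae_of_all _ fun ω => ?_)
      rw [Pi.mul_apply, norm_mul]
      exact mul_le_mul (hfbd ω) (hgbd ω) (norm_nonneg _) (Real.exp_pos _).le
    -- key conditional bound
    have hcexp : μ[g | ℱ t] ≤ᵐ[μ] fun _ => Real.exp (lam ^ 2 * M ^ 2 / 8) := by
      have := condexp_exp_hoeffding (μ := μ) (lam := lam) (ℱ.le t) hM
        (hadp0 (t+1) hst).aestronglyMeasurable (hrange (t+1) hst)
        (by rw [← hsub] at *; exact hcond (t+1) hst)
      exact this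
    -- pull-out
    have hpull : μ[f * g | ℱ t] =ᵐ[μ] f * μ[g | ℱ t] :=
      condExp_mul_of_stronglyMeasurable_left hfSM hfgint hgint
    have hcexp_int : Integrable (fun ω => f ω * (μ[g | ℱ t]) ω) μ :=
      (integrable_condExp (f := f * g) (m := ℱ t)).congr hpull
    calc ∫ ω, Real.exp (lam * ∑ i ∈ Finset.Icc 1 (t+1), (Y i ω - r)) ∂μ
        = ∫ ω, f ω * g ω ∂μ := by exact integral_congr_ae (ae_of_all _ hfg)
      _ = ∫ ω, (μ[f * g | ℱ t]) ω ∂μ := (integral_condExp (ℱ.le t)).symm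
      _ = ∫ ω, f ω * (μ[g | ℱ t]) ω ∂μ := integral_congr_ae hpull
      _ ≤ ∫ ω, f ω * Real.exp (lam ^ 2 * M ^ 2 / 8) ∂μ := by
          refine integral_mono_ae hcexp_int (hfint.mul_const _) ?_
          filter_upwards [hcexp] with ω hω
          exact mul_le_mul_of_nonneg_left hω (hfpos ω)
      _ = (∫ ω, f ω ∂μ) * Real.exp (lam ^ 2 * M ^ 2 / 8) := integral_mul_const _ _
      _ ≤ Real.exp (t * (lam ^ 2 * M ^ 2 / 8)) * Real.exp (lam ^ 2 * M ^ 2 / 8) := by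
          refine mul_le_mul_of_nonneg_right ih (Real.exp_pos _).le
      _ = Real.exp ((t + 1 : ℕ) * (lam ^ 2 * M ^ 2 / 8)) := by
          rw [← Real.exp_add]
          congr 1
          push_cast
          ring

lemma azuma_chernoff (hM : 0 < M)
    (hadp : ∀ s, 1 ≤ s → StronglyMeasurable[ℱ s] (Y s))
    (hrange : ∀ s, 1 ≤ s → ∀ ω, Y s ω ∈ Set.Icc 0 M)
    (hcond : ∀ s, 1 ≤ s → μ[Y s | ℱ (s - 1)] =ᵐ[μ] fun _ => r)
    (t : ℕ) (ht : 1 ≤ t) (c : ℝ) (hc : 0 ≤ c) :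
    μ {ω | ∑ i ∈ Finset.Icc 1 t, Y i ω ≤ t * r - c}
      ≤ ENNReal.ofReal (Real.exp (-(2 * c ^ 2) / (t * M ^ 2))) := by
  have hadp0 : ∀ s, 1 ≤ s → StronglyMeasurable[m0] (Y s) :=
    fun s hs => (hadp s hs).mono (ℱ.le s)
  have htpos : (0:ℝ) < t := by exact_mod_cast ht
  set lam : ℝ := -(4 * c) / (t * M ^ 2) with hlam
  have hlam_le : lam ≤ 0 := by
    apply div_nonpos_of_nonpos_of_nonneg
    · linarith
    · positivity
  set X : Ω → ℝ := fun ω => ∑ i ∈ Finset.Icc 1 t, Y i ω with hX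
  have hXSM : StronglyMeasurable[m0] X := by
    apply Finset.stronglyMeasurable_fun_sum
    intro i hi
    rw [Finset.mem_Icc] at hi
    exact hadp0 i hi.1
  have hXbd : ∀ ω, |X ω| ≤ t * M := by
    intro ω
    calc |X ω| ≤ ∑ i ∈ Finset.Icc 1 t, |Y i ω| := Finset.abs_sum_le_sum_abs _ _
      _ ≤ ∑ _i ∈ Finset.Icc 1 t, M := by
          refine Finset.sum_le_sum fun i hi => ?_
          rw [Finset.mem_Icc] at hi
          obtain ⟨h0, h1⟩ := hrange i hi.1 ω
          rw [abs_le]; constructor <;> linarith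
      _ ≤ t * M := by
          rw [Finset.sum_const, Nat.card_Icc, nsmul_eq_mul]
          simp
  have h_int : Integrable (fun ω => Real.exp (lam * X ω)) μ := by
    refine (integrable_const (Real.exp (|lam| * (t * M)))).mono'
      (Continuous.comp_stronglyMeasurable Real.continuous_exp
        (hXSM.const_mul lam)).aestronglyMeasurable (ae_of_all _ fun ω => ?_)
    rw [Real.norm_eq_abs, Real.abs_exp, Real.exp_le_exp]
    calc lam * X ω ≤ |lam| * |X ω| := by rw [← abs_mul]; exact le_abs_self _
      _ ≤ |lam| * (t * M) := mul_le_mul_of_nonneg_left (hXbd ω) (abs_nonneg _)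
  -- Chernoff bound
  have hcher := measure_le_le_exp_mul_mgf (μ := μ) (X := X) (t * r - c) hlam_le h_int
  -- mgf bound
  have hmgf : mgf X μ lam ≤ Real.exp (lam * (t * r)) * Real.exp (t * (lam ^ 2 * M ^ 2 / 8)) := by
    have heq : ∀ ω, Real.exp (lam * X ω)
        = Real.exp (lam * (t * r)) * Real.exp (lam * ∑ i ∈ Finset.Icc 1 t, (Y i ω - r)) := by
      intro ω
      rw [← Real.exp_add]
      congr 1
      rw [hX, Finset.sum_sub_distrib, Finset.sum_const, Nat.card_Icc, nsmul_eq_mul]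
      simp only [Nat.add_sub_cancel]
      ring
    have : mgf X μ lam = Real.exp (lam * (t * r))
        * ∫ ω, Real.exp (lam * ∑ i ∈ Finset.Icc 1 t, (Y i ω - r)) ∂μ := by
      rw [mgf]
      rw [integral_congr_ae (ae_of_all _ heq)]
      exact integral_const_mul _ _
    rw [this]
    exact mul_le_mul_of_nonneg_left (azuma_mgf ℱ hM hadp hrange hcond lam t)
      (Real.exp_pos _).le
  have hbound : Real.exp (-lam * (t * r - c)) * mgf X μ lam
      ≤ Real.exp (-(2 * c ^ 2) / (t * M ^ 2)) := by
    calc Real.exp (-lam * (t * r - c)) * mgf X μ lam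
        ≤ Real.exp (-lam * (t * r - c))
          * (Real.exp (lam * (t * r)) * Real.exp (t * (lam ^ 2 * M ^ 2 / 8))) :=
          mul_le_mul_of_nonneg_left hmgf (Real.exp_pos _).le
      _ = Real.exp (-lam * (t * r - c) + lam * (t * r) + t * (lam ^ 2 * M ^ 2 / 8)) := by
          rw [← Real.exp_add, ← Real.exp_add, add_assoc]
      _ = Real.exp (-(2 * c ^ 2) / (t * M ^ 2)) := by
          congr 1
          rw [hlam]
          have h1 : (t : ℝ) * M ^ 2 ≠ 0 := by positivity
          field_simp
          ring
  have := hcher.trans hbound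
  calc μ {ω | X ω ≤ t * r - c}
      = ENNReal.ofReal ((μ {ω | X ω ≤ t * r - c}).toReal) := by
        rw [ENNReal.ofReal_toReal (measure_ne_top μ _)]
    _ ≤ ENNReal.ofReal (Real.exp (-(2 * c ^ 2) / (t * M ^ 2))) :=
        ENNReal.ofReal_le_ofReal this

end Azuma

lemma event_bound {Ω : Type*} {m0 : MeasurableSpace Ω} {μ : Measure Ω} [IsProbabilityMeasure μ]
    (ℱ : MeasureTheory.Filtration ℕ m0) {Mtil r εr a b : ℝ} (hM : 0 < Mtil)
    {Y : ℕ → Ω → ℝ}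
    (hadp : ∀ s, 1 ≤ s → StronglyMeasurable[ℱ s] (Y s))
    (hrange : ∀ s, 1 ≤ s → ∀ ω, Y s ω ∈ Set.Icc 0 Mtil)
    (hcond : ∀ s, 1 ≤ s → μ[Y s | ℱ (s - 1)] =ᵐ[μ] fun _ => r)
    (t : ℕ) (ht : 1 ≤ t)
    (ha : 0 < a) (ha1 : a ≤ 1) (hb : 1 ≤ b) (hεr : εr < r) :
    μ {ω | ∑ i ∈ Finset.Icc 1 t, Y i ω
        ≤ (t : ℝ) * εr - (t : ℝ) * (Mtil * Real.sqrt (Real.log (b / a) / (2 * (t : ℝ))))}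
      ≤ ENNReal.ofReal (a / b) := by
  have htpos : (0 : ℝ) < t := by exact_mod_cast ht
  have hba : (1 : ℝ) ≤ b / a := by rw [le_div_iff₀ ha, one_mul]; linarith
  set L : ℝ := Real.log (b / a) with hLdef
  have hL0 : 0 ≤ L := Real.log_nonneg hba
  have hx0 : 0 ≤ L / (2 * (t : ℝ)) := by positivity
  set rd : ℝ := Mtil * Real.sqrt (L / (2 * (t : ℝ))) with hrddef
  have hrd0 : 0 ≤ rd := mul_nonneg hM.le (Real.sqrt_nonneg _)
  set c : ℝ := (t : ℝ) * (r - εr) + (t : ℝ) * rd with hcdef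
  have hc0 : 0 ≤ c := by nlinarith
  have hseteq : ((t : ℝ) * εr - (t : ℝ) * rd) = (t : ℝ) * r - c := by rw [hcdef]; ring
  rw [hseteq]
  refine le_trans (azuma_chernoff ℱ hM hadp hrange hcond t ht c hc0) ?_
  apply ENNReal.ofReal_le_ofReal
  have hcge : (t : ℝ) * rd ≤ c := by nlinarith
  have hsq : ((t : ℝ) * rd) ^ 2 ≤ c ^ 2 := by nlinarith [mul_nonneg htpos.le hrd0]
  have hexp_eq : Real.exp (-(2 * ((t : ℝ) * rd) ^ 2) / ((t : ℝ) * Mtil ^ 2)) = a / b := by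
    have h1 : ((t : ℝ) * rd) ^ 2 = (t : ℝ) ^ 2 * Mtil ^ 2 * (L / (2 * (t : ℝ))) := by
      rw [hrddef, mul_pow, mul_pow, Real.sq_sqrt hx0]; ring
    have h2 : -(2 * ((t : ℝ) * rd) ^ 2) / ((t : ℝ) * Mtil ^ 2) = -L := by
      rw [h1]; field_simp
    rw [h2, Real.exp_neg, hLdef, Real.exp_log (lt_of_lt_of_le zero_lt_one hba), inv_div]
  calc Real.exp (-(2 * c ^ 2) / ((t : ℝ) * Mtil ^ 2))
      ≤ Real.exp (-(2 * ((t : ℝ) * rd) ^ 2) / ((t : ℝ) * Mtil ^ 2)) := by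
        apply Real.exp_le_exp.mpr
        have hnum : -(2 * c ^ 2) ≤ -(2 * ((t : ℝ) * rd) ^ 2) := by nlinarith
        have hden : (0 : ℝ) < (t : ℝ) * Mtil ^ 2 := by positivity
        exact (div_le_div_iff_of_pos_right hden).mpr hnum
    _ = a / b := hexp_eq

end Auxiliary

set_option maxHeartbeats 2000000

/-- Safety of IPS+Hoeff: with the Hoeffding-style upper-confidence-bound threshold
`û_t = max{ u ∈ U : (1/t)·Σ_{i≤t} Z_i(u) + M̃·√(log(N/α_t)/(2t)) ≤ ε }`,
one has `P(∃ t ≥ 1 : R(û_t) > ε) ≤ α`. -/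
theorem stmt_7 {Ω : Type*} {m0 : MeasurableSpace Ω} {μ : Measure Ω} [IsProbabilityMeasure μ]
    (ℱ : MeasureTheory.Filtration ℕ m0)
    (α ε : ℝ) (hα : α ∈ Set.Ioo (0 : ℝ) 1) (hε : ε ∈ Set.Ioo (0 : ℝ) 1)
    -- constant exploration probability ρ, M̃ = (1−ρ)/ρ, α_t = 6α/(π²t²)
    (ρ : ℝ) (hρ : ρ ∈ Set.Ioo (0 : ℝ) 1)
    (Mtil : ℝ) (hMtil : Mtil = (1 - ρ) / ρ)
    (αt : ℕ → ℝ) (hαt : ∀ t : ℕ, αt t = 6 * α / (Real.pi ^ 2 * (t : ℝ) ^ 2))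
    -- a finite threshold grid U ⊆ [0,1] of cardinality N
    (grid : Finset ℝ) (hgrid : ↑grid ⊆ Set.Icc (0 : ℝ) 1)
    (N : ℕ) (hN : grid.card = N)
    -- data stream and routing variables
    (l U uhat ξ π : ℕ → Ω → ℝ)
    (hl_meas : ∀ s, 1 ≤ s → Measurable[ℱ s] (l s))
    (hU_meas : ∀ s, 1 ≤ s → Measurable[ℱ s] (U s))
    (hl_mem : ∀ s ω, 1 ≤ s → l s ω ∈ Set.Icc (0 : ℝ) 1)
    (hU_mem : ∀ s ω, 1 ≤ s → U s ω ∈ Set.Icc (0 : ℝ) 1)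
    (hξ_meas : ∀ s, 1 ≤ s → Measurable[ℱ s] (ξ s))
    (hξ01 : ∀ s ω, ξ s ω = 0 ∨ ξ s ω = 1)
    (hπ : ∀ s ω, 1 ≤ s → π s ω =
      Set.indicator {ω' | uhat (s - 1) ω' ≤ U s ω'} (fun _ => (1 : ℝ)) ω
        + ρ * Set.indicator {ω' | U s ω' < uhat (s - 1) ω'} (fun _ => (1 : ℝ)) ω)
    (hξcond : ∀ s, 1 ≤ s →
      μ[ξ s | (ℱ (s - 1) : MeasurableSpace Ω)
          ⊔ MeasurableSpace.comap (l s) Real.measurableSpace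
          ⊔ MeasurableSpace.comap (U s) Real.measurableSpace] =ᵐ[μ] π s)
    -- (l_t, U_t) i.i.d. and independent of the past
    (hident : ∀ s t : ℕ, 1 ≤ s → 1 ≤ t →
      IdentDistrib (fun ω => (l s ω, U s ω)) (fun ω => (l t ω, U t ω)) μ μ)
    (hindep : iIndepFun
      (fun s ω => (l (s + 1) ω, U (s + 1) ω)) μ)
    (hindep_past : ∀ s, 1 ≤ s →
      Indep (MeasurableSpace.comap (fun ω => (l s ω, U s ω))
        (inferInstance : MeasurableSpace (ℝ × ℝ))) (ℱ (s - 1)) μ)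
    -- the IPS estimators Z_i(u) and the risk R(u)
    (Z : ℝ → ℕ → Ω → ℝ)
    (hZ : ∀ v s ω, 1 ≤ s → Z v s ω = (1 - ρ) * l s ω * ξ s ω *
      Set.indicator {ω' | U s ω' < v} (fun _ => (1 : ℝ)) ω / π s ω)
    (R : ℝ → ℝ)
    (hR : ∀ v, R v = (1 - ρ) *
      ∫ ω, l 1 ω * Set.indicator {ω' | U 1 ω' < v} (fun _ => (1 : ℝ)) ω ∂μ)
    -- for each fixed u ∈ U: Z_i(u) ∈ [0, M̃] and E[Z_i(u) | F_{i-1}] = R(u) a.s.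
    (hZ_range : ∀ v ∈ grid, ∀ s, 1 ≤ s → ∀ ω, Z v s ω ∈ Set.Icc (0 : ℝ) Mtil)
    (hZ_cond : ∀ v ∈ grid, ∀ s, 1 ≤ s → μ[Z v s | ℱ (s - 1)] =ᵐ[μ] fun _ => R v)
    -- the UCB threshold û_t, û_t = 0 if the feasible set is empty
    (huhat : ∀ t ω, 1 ≤ t → uhat t ω =
      if h : (grid.filter (fun v =>
          (1 / (t : ℝ)) * ∑ i ∈ Finset.Icc 1 t, Z v i ω
            + Mtil * Real.sqrt (Real.log (N / αt t) / (2 * (t : ℝ))) ≤ ε)).Nonempty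
      then (grid.filter (fun v =>
          (1 / (t : ℝ)) * ∑ i ∈ Finset.Icc 1 t, Z v i ω
            + Mtil * Real.sqrt (Real.log (N / αt t) / (2 * (t : ℝ))) ≤ ε)).max' h
      else 0) :
    μ {ω | ∃ t : ℕ, 1 ≤ t ∧ ε < R (uhat t ω)} ≤ ENNReal.ofReal α := by
  obtain ⟨hα0, hα1⟩ := hα
  obtain ⟨hε0, hε1⟩ := hε
  obtain ⟨hρ0, hρ1⟩ := hρ
  have hMtil0 : 0 < Mtil := by rw [hMtil]; exact div_pos (by linarith) hρ0
  -- the conditioning σ-algebras and a.e.-measurable version of π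
  set m' : ℕ → MeasurableSpace Ω := fun s =>
    (ℱ (s - 1) : MeasurableSpace Ω)
      ⊔ MeasurableSpace.comap (l s) Real.measurableSpace
      ⊔ MeasurableSpace.comap (U s) Real.measurableSpace with hm'
  have hm'le : ∀ s, 1 ≤ s → m' s ≤ ℱ s := by
    intro s hs
    refine sup_le (sup_le ?_ ?_) ?_
    · exact ℱ.mono (Nat.sub_le s 1)
    · exact measurable_iff_comap_le.mp (hl_meas s hs)
    · exact measurable_iff_comap_le.mp (hU_meas s hs)
  set g : ℕ → Ω → ℝ := fun s => μ[ξ s | m' s] with hgdef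
  have hgSM : ∀ s, 1 ≤ s → StronglyMeasurable[ℱ s] (g s) :=
    fun s hs => stronglyMeasurable_condExp.mono (hm'le s hs)
  -- modified (adapted) estimators
  set Zt : ℝ → ℕ → Ω → ℝ := fun v s ω =>
    max 0 (min Mtil ((1 - ρ) * l s ω * ξ s ω *
      Set.indicator {ω' | U s ω' < v} (fun _ => (1 : ℝ)) ω / g s ω)) with hZtdef
  have hZtSM : ∀ v s, 1 ≤ s → StronglyMeasurable[ℱ s] (Zt v s) := by
    intro v s hs
    apply Measurable.stronglyMeasurable
    have hind : Measurable[ℱ s]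
        (fun ω => Set.indicator {ω' | U s ω' < v} (fun _ => (1 : ℝ)) ω) := by
      have hset : MeasurableSet[ℱ s] {ω' | U s ω' < v} := hU_meas s hs measurableSet_Iio
      exact measurable_const.indicator hset
    exact measurable_const.max (measurable_const.min
      (((((hl_meas s hs).const_mul (1 - ρ)).mul (hξ_meas s hs)).mul hind).div
        ((hgSM s hs).measurable)))
  have hZt_range : ∀ v s ω, Zt v s ω ∈ Set.Icc 0 Mtil := by
    intro v s ω
    exact ⟨le_max_left _ _, max_le hMtil0.le (min_le_left _ _)⟩
  have hZae : ∀ v ∈ grid, ∀ s, 1 ≤ s → Z v s =ᵐ[μ] Zt v s := by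
    intro v hv s hs
    filter_upwards [hξcond s hs] with ω hω
    have hgπ : g s ω = π s ω := hω
    have hmem := hZ_range v hv s hs ω
    rw [hZ v s ω hs] at hmem
    show Z v s ω = max 0 (min Mtil ((1 - ρ) * l s ω * ξ s ω *
      Set.indicator {ω' | U s ω' < v} (fun _ => (1 : ℝ)) ω / g s ω))
    rw [hZ v s ω hs, hgπ, min_eq_right hmem.2, max_eq_right hmem.1]
  have hZt_cond : ∀ v ∈ grid, ∀ s, 1 ≤ s → μ[Zt v s | ℱ (s - 1)] =ᵐ[μ] fun _ => R v :=
    fun v hv s hs => (condExp_congr_ae (hZae v hv s hs)).symm.trans (hZ_cond v hv s hs)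
  -- R 0 = 0
  have hR0 : R 0 = 0 := by
    rw [hR 0]
    have hz : ∀ ω', l 1 ω' * Set.indicator {ω'' | U 1 ω'' < (0:ℝ)}
        (fun _ => (1 : ℝ)) ω' = 0 := by
      intro ω'
      rw [Set.indicator_of_notMem, mul_zero]
      exact not_lt.mpr (hU_mem 1 ω' le_rfl).1
    rw [integral_congr_ae (ae_of_all _ hz), integral_zero, mul_zero]
  -- the bad events
  set A : ℕ → ℝ → Set Ω := fun t v =>
    if 1 ≤ t ∧ ε < R v then
      {ω | ∑ i ∈ Finset.Icc 1 t, Zt v i ω ≤ (t : ℝ) * ε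
        - (t : ℝ) * (Mtil * Real.sqrt (Real.log (N / αt t) / (2 * (t : ℝ))))}
    else ∅ with hAdef
  -- a.e. identification of Z and Zt
  have hGae : ∀ᵐ ω ∂μ, ∀ v ∈ (↑grid : Set ℝ), ∀ s : ℕ, Z v (s + 1) ω = Zt v (s + 1) ω := by
    rw [ae_ball_iff (grid.finite_toSet.countable)]
    intro v hv
    rw [ae_all_iff]
    intro s
    exact hZae v (Finset.mem_coe.mp hv) (s + 1) (by omega)
  have hGnull : μ {ω | ¬ ∀ v ∈ (↑grid : Set ℝ), ∀ s : ℕ, Z v (s + 1) ω = Zt v (s + 1) ω} = 0 :=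
    by exact ae_iff.mp hGae
  -- inclusion of the target event
  have hincl : {ω | ∃ t : ℕ, 1 ≤ t ∧ ε < R (uhat t ω)} ⊆
      (⋃ t : ℕ, ⋃ v ∈ grid, A t v)
        ∪ {ω | ¬ ∀ v ∈ (↑grid : Set ℝ), ∀ s : ℕ, Z v (s + 1) ω = Zt v (s + 1) ω} := by
    intro ω hω
    by_cases hωG : ∀ v ∈ (↑grid : Set ℝ), ∀ s : ℕ, Z v (s + 1) ω = Zt v (s + 1) ω
    swap
    · exact Or.inr hωG
    left
    obtain ⟨t, ht, hRt⟩ := hω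
    have htpos : (0 : ℝ) < t := by exact_mod_cast ht
    have key : ∀ v, v ∈ grid →
        ((1 / (t : ℝ)) * ∑ i ∈ Finset.Icc 1 t, Z v i ω
          + Mtil * Real.sqrt (Real.log (N / αt t) / (2 * (t : ℝ))) ≤ ε) →
        ε < R v → ω ∈ ⋃ t' : ℕ, ⋃ v' ∈ grid, A t' v' := by
      intro v hvgrid hfeas hεv
      have hsumeq : ∑ i ∈ Finset.Icc 1 t, Z v i ω = ∑ i ∈ Finset.Icc 1 t, Zt v i ω := by
        refine Finset.sum_congr rfl fun i hi => ?_
        rw [Finset.mem_Icc] at hi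
        have := hωG v (Finset.mem_coe.mpr hvgrid) (i - 1)
        rwa [Nat.sub_add_cancel hi.1] at this
      have hineq : ∑ i ∈ Finset.Icc 1 t, Zt v i ω ≤ (t : ℝ) * ε
          - (t : ℝ) * (Mtil * Real.sqrt (Real.log (N / αt t) / (2 * (t : ℝ)))) := by
        have h2 := mul_le_mul_of_nonneg_left hfeas htpos.le
        have h3 : (t : ℝ) * ((1 / (t : ℝ)) * ∑ i ∈ Finset.Icc 1 t, Z v i ω
            + Mtil * Real.sqrt (Real.log (N / αt t) / (2 * (t : ℝ))))
            = ∑ i ∈ Finset.Icc 1 t, Z v i ω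
              + (t : ℝ) * (Mtil * Real.sqrt (Real.log (N / αt t) / (2 * (t : ℝ)))) := by
          field_simp
        rw [h3] at h2
        linarith [hsumeq ▸ h2]
      refine Set.mem_iUnion.mpr ⟨t, ?_⟩
      refine Set.mem_biUnion hvgrid ?_
      show ω ∈ A t v
      simp only [hAdef]
      rw [if_pos (⟨ht, hεv⟩ : 1 ≤ t ∧ ε < R v)]
      exact hineq
    rw [huhat t ω ht] at hRt
    split_ifs at hRt with hne
    · obtain ⟨hvgrid, hfeas⟩ := Finset.mem_filter.mp (Finset.max'_mem _ hne)
      exact key _ hvgrid hfeas hRt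
    · rw [hR0] at hRt; linarith
  -- per-event bound
  have hAbound : ∀ t : ℕ, ∀ v ∈ grid, μ (A t v) ≤ ENNReal.ofReal (αt t / N) := by
    intro t v hv
    simp only [hAdef]
    split_ifs with hcnd
    · obtain ⟨ht, hεv⟩ := hcnd
      have htpos : (0 : ℝ) < t := by exact_mod_cast ht
      have hαt_pos : 0 < αt t := by
        rw [hαt]
        exact div_pos (by linarith)
          (mul_pos (pow_pos Real.pi_pos 2) (pow_pos htpos 2))
      have hαt_le1 : αt t ≤ 1 := by
        rw [hαt, div_le_one (mul_pos (pow_pos Real.pi_pos 2) (pow_pos htpos 2))]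
        have hπ3 : (3 : ℝ) < Real.pi := Real.pi_gt_three
        have ht1 : (1 : ℝ) ≤ (t : ℝ) := by exact_mod_cast ht
        have h9 : (9 : ℝ) ≤ Real.pi ^ 2 := by nlinarith
        have ht2 : (1 : ℝ) ≤ (t : ℝ) ^ 2 := by nlinarith
        nlinarith
      have hN1 : (1 : ℝ) ≤ (N : ℝ) := by
        have h0 : 0 < grid.card := Finset.card_pos.mpr ⟨v, hv⟩
        rw [hN] at h0
        exact_mod_cast h0
      exact event_bound ℱ hMtil0 (fun s hs => hZtSM v s hs)
        (fun s _ ω => hZt_range v s ω) (hZt_cond v hv) t ht hαt_pos hαt_le1 hN1 hεv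
    · exact le_of_eq_of_le (measure_empty) (by simp)
  -- summation
  have hsum : HasSum (fun t : ℕ => αt t) α := by
    have h1 := hasSum_zeta_two.mul_left (6 * α / Real.pi ^ 2)
    have hfun : (fun t : ℕ => αt t) = fun t : ℕ => 6 * α / Real.pi ^ 2 * (1 / (t : ℝ) ^ 2) := by
      funext t
      rw [hαt t, mul_one_div, div_div]
    rw [hfun]
    convert h1 using 1; rfl
    have hπ0 : Real.pi ≠ 0 := Real.pi_ne_zero
    rw [eq_comm, div_mul_div_comm, div_eq_iff (by positivity)]; ring
  have htsum : ∑' t : ℕ, ENNReal.ofReal (αt t) = ENNReal.ofReal α := by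
    rw [← ENNReal.ofReal_tsum_of_nonneg
      (fun t => by rw [hαt]; exact div_nonneg (by linarith) (by positivity)) hsum.summable,
      hsum.tsum_eq]
  calc μ {ω | ∃ t : ℕ, 1 ≤ t ∧ ε < R (uhat t ω)}
      ≤ μ ((⋃ t : ℕ, ⋃ v ∈ grid, A t v)
        ∪ {ω | ¬ ∀ v ∈ (↑grid : Set ℝ), ∀ s : ℕ, Z v (s + 1) ω = Zt v (s + 1) ω}) :=
        measure_mono hincl
    _ ≤ μ (⋃ t : ℕ, ⋃ v ∈ grid, A t v)
        + μ {ω | ¬ ∀ v ∈ (↑grid : Set ℝ), ∀ s : ℕ, Z v (s + 1) ω = Zt v (s + 1) ω} :=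
        measure_union_le _ _
    _ = μ (⋃ t : ℕ, ⋃ v ∈ grid, A t v) := by rw [hGnull, add_zero]
    _ ≤ ∑' t : ℕ, μ (⋃ v ∈ grid, A t v) := measure_iUnion_le _
    _ ≤ ∑' t : ℕ, ENNReal.ofReal (αt t) := by
        refine ENNReal.tsum_le_tsum fun t => ?_
        refine le_trans (measure_biUnion_finset_le _ _) ?_
        refine le_trans (Finset.sum_le_sum fun v hv => hAbound t v hv) ?_
        rw [Finset.sum_const, hN, nsmul_eq_mul]
        have hαtnn : 0 ≤ αt t := by rw [hαt]; exact div_nonneg (by linarith) (by positivity)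
        rcases Nat.eq_zero_or_pos N with h0 | hpos
        · simp [h0]
        · have hNr : (N : ℝ) ≠ 0 := by exact_mod_cast hpos.ne'
          rw [← ENNReal.ofReal_natCast, ← ENNReal.ofReal_mul (Nat.cast_nonneg N)]
          apply ENNReal.ofReal_le_ofReal
          rw [show (N : ℝ) * (αt t / ↑N) = αt t by field_simp]
    _ = ENNReal.ofReal α := htsum
end

section
/- Let T ≥ 1, let a_1, …, a_T be nonnegative real numbers, let β > 0 and γ > 0, and set S_0 = β and S_t = Σ_{i=1}^t a_i + β for 1 ≤ t ≤ T. If a_t ≤ γ·S_{t-1} holds for all 1 ≤ t ≤ T, then Σ_{t=1}^T a_t/S_{t-1} ≤ C(γ)·log(S_T/β), where C(γ) = γ/log(1 + γ). -/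
/-- Chord inequality: for `0 ≤ x ≤ γ`, `x ≤ (γ / log(1+γ)) * log(1+x)`. -/
lemma key_chord (γ x : ℝ) (hγ : 0 < γ) (hx0 : 0 ≤ x) (hxγ : x ≤ γ) :
    x ≤ (γ / Real.log (1 + γ)) * Real.log (1 + x) := by
  have hlogγ : 0 < Real.log (1 + γ) := Real.log_pos (by linarith)
  have hcon : ConcaveOn ℝ (Set.Ioi 0) Real.log := strictConcaveOn_log_Ioi.concaveOn
  have h1 : (1 : ℝ) ∈ Set.Ioi (0:ℝ) := by norm_num
  have h2 : (1 + γ) ∈ Set.Ioi (0:ℝ) := by simp only [Set.mem_Ioi]; linarith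
  have hp : 0 ≤ (γ - x) / γ := div_nonneg (by linarith) hγ.le
  have hq : 0 ≤ x / γ := div_nonneg hx0 hγ.le
  have hpq : (γ - x) / γ + x / γ = 1 := by field_simp; ring
  have hkey := hcon.2 h1 h2 hp hq hpq
  simp only [smul_eq_mul, mul_one, Real.log_one, mul_zero, zero_add] at hkey
  have heq : (γ - x) / γ + x / γ * (1 + γ) = 1 + x := by field_simp; ring
  rw [heq] at hkey
  -- hkey : x / γ * Real.log (1 + γ) ≤ Real.log (1 + x)
  rw [div_mul_eq_mul_div, le_div_iff₀ hlogγ]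
  calc x * Real.log (1 + γ) = (x / γ * Real.log (1 + γ)) * γ := by field_simp
    _ ≤ Real.log (1 + x) * γ := by
        apply mul_le_mul_of_nonneg_right hkey hγ.le
    _ = γ * Real.log (1 + x) := by ring

/-- Partial-sum lemma: if `a_t ≤ γ·S_{t-1}` where `S_t = Σ_{i≤t} a_i + β`, then
`Σ_{t=1}^T a_t / S_{t-1} ≤ (γ / log(1+γ)) · log(S_T / β)`. -/
theorem stmt_8 (T : ℕ) (hT : 1 ≤ T) (a : ℕ → ℝ)
    (ha : ∀ t, 1 ≤ t → t ≤ T → 0 ≤ a t)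
    (β γ : ℝ) (hβ : 0 < β) (hγ : 0 < γ)
    (S : ℕ → ℝ)
    (hS0 : S 0 = β)
    (hS : ∀ t, 1 ≤ t → t ≤ T → S t = (∑ i ∈ Finset.Icc 1 t, a i) + β)
    (hbound : ∀ t, 1 ≤ t → t ≤ T → a t ≤ γ * S (t - 1)) :
    ∑ t ∈ Finset.Icc 1 T, a t / S (t - 1) ≤
      (γ / Real.log (1 + γ)) * Real.log (S T / β) := by
  set C := γ / Real.log (1 + γ) with hC
  -- positivity of S t for t ≤ T
  have hSpos : ∀ t, t ≤ T → 0 < S t := by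
    intro t htT
    rcases Nat.eq_zero_or_pos t with h0 | h1
    · rw [h0, hS0]; exact hβ
    · rw [hS t h1 htT]
      have : 0 ≤ ∑ i ∈ Finset.Icc 1 t, a i :=
        Finset.sum_nonneg fun i hi => by
          simp only [Finset.mem_Icc] at hi
          exact ha i hi.1 (hi.2.trans htT)
      linarith
  -- step relation
  have hstep : ∀ t, 1 ≤ t → t ≤ T → S t = S (t - 1) + a t := by
    intro t h1 h2
    obtain ⟨n, rfl⟩ : ∃ n, t = n + 1 := ⟨t - 1, by omega⟩
    simp only [Nat.add_sub_cancel]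
    rw [hS (n + 1) h1 h2, Finset.sum_Icc_succ_top (Nat.le_add_left 1 n)]
    have hSn : S n = (∑ i ∈ Finset.Icc 1 n, a i) + β := by
      rcases Nat.eq_zero_or_pos n with rfl | hn
      · simp [hS0]
      · exact hS n hn (by omega)
    rw [hSn]; ring
  -- pointwise bound
  have hpt : ∀ t, 1 ≤ t → t ≤ T →
      a t / S (t - 1) ≤ C * (Real.log (S t) - Real.log (S (t - 1))) := by
    intro t h1 h2
    have hprev : 0 < S (t - 1) := hSpos _ (by omega)
    have hx0 : 0 ≤ a t / S (t - 1) := div_nonneg (ha t h1 h2) hprev.le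
    have hxγ : a t / S (t - 1) ≤ γ := by
      rw [div_le_iff₀ hprev]; exact hbound t h1 h2
    have := key_chord γ (a t / S (t - 1)) hγ hx0 hxγ
    have heq : 1 + a t / S (t - 1) = S t / S (t - 1) := by
      rw [hstep t h1 h2]; field_simp
    rw [heq, Real.log_div (hSpos t h2).ne' hprev.ne'] at this
    exact this
  calc ∑ t ∈ Finset.Icc 1 T, a t / S (t - 1)
      ≤ ∑ t ∈ Finset.Icc 1 T, C * (Real.log (S t) - Real.log (S (t - 1))) := by
        apply Finset.sum_le_sum
        intro t ht
        simp only [Finset.mem_Icc] at ht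
        exact hpt t ht.1 ht.2
    _ = C * ∑ t ∈ Finset.Icc 1 T, (Real.log (S t) - Real.log (S (t - 1))) := by
        rw [Finset.mul_sum]
    _ = C * (Real.log (S T) - Real.log (S 0)) := by
        congr 1
        have e : Finset.Icc 1 T = Finset.Ico 1 (T + 1) := by
          rw [Finset.Ico_add_one_right_eq_Icc]
        rw [e, Finset.sum_Ico_eq_sum_range]
        have h1 : T + 1 - 1 = T := by omega
        rw [h1]
        have h2 : ∀ i ∈ Finset.range T,
            Real.log (S (1 + i)) - Real.log (S (1 + i - 1))
              = Real.log (S (i + 1)) - Real.log (S i) := by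
          intro i _
          rw [Nat.add_comm 1 i, Nat.add_sub_cancel]
        rw [Finset.sum_congr rfl h2, Finset.sum_range_sub (fun i => Real.log (S i)) T]
    _ = C * Real.log (S T / β) := by
        rw [hS0, Real.log_div (hSpos T le_rfl).ne' hβ.ne']
end

section
/- Let (F_t)_{t≥0} be a filtration on a probability space, let (D_t)_{t≥1} be a uniformly bounded sequence of real random variables with D_t F_t-measurable, and let (λ_t)_{t≥1} be bounded nonnegative random variables with λ_t F_{t-1}-measurable. Suppose there is δ > 0 such that 1 + λ_t·D_t ≥ δ almost surely for all t. Then the process defined by Y_0 = 1 and Y_t = Π_{i=1}^t (1 + λ_i·D_i)/(1 + λ_i·E[D_i | F_{i-1}]) is a martingale with respect to (F_t)_{t≥0}, and E[Y_t] = 1 for every t ≥ 0. -/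
open MeasureTheory ProbabilityTheory

/-- The likelihood-ratio process
`Y_t = Π_{i=1}^t (1 + λ_i·D_i)/(1 + λ_i·E[D_i | F_{i-1}])` is a martingale with
`E[Y_t] = 1` for every `t`. -/
theorem stmt_10 {Ω : Type*} {m0 : MeasurableSpace Ω} {μ : Measure Ω} [IsProbabilityMeasure μ]
    (ℱ : MeasureTheory.Filtration ℕ m0)
    (D lam : ℕ → Ω → ℝ)
    (hD_meas : ∀ t, 1 ≤ t → Measurable[ℱ t] (D t))
    (hD_bdd : ∃ C : ℝ, ∀ t ω, |D t ω| ≤ C)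
    (hlam_meas : ∀ t, 1 ≤ t → Measurable[ℱ (t - 1)] (lam t))
    (hlam_nonneg : ∀ t ω, 0 ≤ lam t ω)
    (hlam_bdd : ∃ C : ℝ, ∀ t ω, lam t ω ≤ C)
    (δ : ℝ) (hδ : 0 < δ)
    (hconstr : ∀ t, 1 ≤ t → ∀ᵐ ω ∂μ, δ ≤ 1 + lam t ω * D t ω)
    (Y : ℕ → Ω → ℝ)
    (hY : ∀ t ω, Y t ω = ∏ i ∈ Finset.Icc 1 t,
      (1 + lam i ω * D i ω) / (1 + lam i ω * (μ[D i | ℱ (i - 1)]) ω)) :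
    Martingale Y ℱ μ ∧ ∀ t : ℕ, ∫ ω, Y t ω ∂μ = 1 := by
  obtain ⟨CD0, hCD0⟩ := hD_bdd
  obtain ⟨CL0, hCL0⟩ := hlam_bdd
  set CD := max CD0 0 with hCDdef
  set CL := max CL0 0 with hCLdef
  have hCD : ∀ t ω, |D t ω| ≤ CD := fun t ω => (hCD0 t ω).trans (le_max_left _ _)
  have hCL : ∀ t ω, lam t ω ≤ CL := fun t ω => (hCL0 t ω).trans (le_max_left _ _)
  have hCDnn : 0 ≤ CD := le_max_right _ _
  have hCLnn : 0 ≤ CL := le_max_right _ _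
  -- basic measurability w.r.t. m0
  have hDm0 : ∀ i, 1 ≤ i → Measurable (D i) := fun i hi =>
    (hD_meas i hi).mono (ℱ.le i) le_rfl
  have hLm0 : ∀ i, 1 ≤ i → Measurable (lam i) := fun i hi =>
    (hlam_meas i hi).mono (ℱ.le (i - 1)) le_rfl
  -- integrability facts
  have hDint : ∀ i, 1 ≤ i → Integrable (D i) μ := fun i hi =>
    ⟨(hDm0 i hi).aestronglyMeasurable,
      HasFiniteIntegral.of_bounded (C := CD)
        (ae_of_all μ fun ω => by simpa [Real.norm_eq_abs] using hCD i ω)⟩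
  have hLDbound : ∀ i ω, |lam i ω * D i ω| ≤ CL * CD := by
    intro i ω
    rw [abs_mul, abs_of_nonneg (hlam_nonneg i ω)]
    exact mul_le_mul (hCL i ω) (hCD i ω) (abs_nonneg _) hCLnn
  have hLDint : ∀ i, 1 ≤ i → Integrable (lam i * D i) μ := fun i hi =>
    ⟨((hLm0 i hi).mul (hDm0 i hi)).aestronglyMeasurable,
      HasFiniteIntegral.of_bounded (C := CL * CD)
        (ae_of_all μ fun ω => by
          rw [Real.norm_eq_abs, Pi.mul_apply]; exact hLDbound i ω)⟩
  have hNint : ∀ i, 1 ≤ i → Integrable (fun ω => 1 + lam i ω * D i ω) μ := by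
    intro i hi
    have := (integrable_const (1 : ℝ)).add (hLDint i hi)
    exact this
  -- key conditional expectation computation
  have key : ∀ i, 1 ≤ i →
      (μ[fun ω => 1 + lam i ω * D i ω | ℱ (i - 1)] =ᵐ[μ]
        fun ω => 1 + lam i ω * (μ[D i | ℱ (i - 1)]) ω) := by
    intro i hi
    have heq : (fun ω => 1 + lam i ω * D i ω) = (fun _ => (1 : ℝ)) + lam i * D i := rfl
    have hadd := condExp_add (μ := μ) (m := ℱ (i - 1)) (integrable_const (1 : ℝ)) (hLDint i hi)
    have hpull := condExp_mul_of_stronglyMeasurable_left (μ := μ)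
      ((hlam_meas i hi).stronglyMeasurable) (hLDint i hi) (hDint i hi)
    rw [heq]
    refine hadd.trans ?_
    rw [condExp_const (ℱ.le (i - 1))]
    filter_upwards [hpull] with ω hω
    simp only [Pi.add_apply, Pi.mul_apply] at hω ⊢
    rw [hω]
  -- the denominator is a.e. bounded below by δ
  have hden : ∀ i, 1 ≤ i →
      ∀ᵐ ω ∂μ, δ ≤ 1 + lam i ω * (μ[D i | ℱ (i - 1)]) ω := by
    intro i hi
    have hmono := condExp_mono (μ := μ) (m := ℱ (i - 1)) (integrable_const δ)
      (hNint i hi) (hconstr i hi)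
    rw [condExp_const (ℱ.le (i - 1))] at hmono
    filter_upwards [hmono, key i hi] with ω h1 h2
    rw [← h2]
    exact h1
  -- a.e. bound on each factor
  set A : ℝ := (1 + CL * CD) / δ with hAdef
  have hfac_bdd : ∀ i, 1 ≤ i → ∀ᵐ ω ∂μ,
      |(1 + lam i ω * D i ω) / (1 + lam i ω * (μ[D i | ℱ (i - 1)]) ω)| ≤ A := by
    intro i hi
    filter_upwards [hden i hi] with ω hω
    have hnum : |1 + lam i ω * D i ω| ≤ 1 + CL * CD :=
      (abs_add_le _ _).trans (by simpa using hLDbound i ω)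
    have hdenpos : δ ≤ |1 + lam i ω * (μ[D i | ℱ (i - 1)]) ω| := by
      rw [abs_of_pos (lt_of_lt_of_le hδ hω)]; exact hω
    rw [abs_div]
    exact div_le_div₀ (by positivity) hnum hδ hdenpos
  -- measurability of Y
  have hYmeas : ∀ t, Measurable[ℱ t] (Y t) := by
    intro t
    have hYe : Y t = fun ω => ∏ i ∈ Finset.Icc 1 t,
        (1 + lam i ω * D i ω) / (1 + lam i ω * (μ[D i | ℱ (i - 1)]) ω) := funext (hY t)
    rw [hYe]
    apply Finset.measurable_prod
    intro i hi
    obtain ⟨hi1, hit⟩ := Finset.mem_Icc.mp hi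
    have h1 : Measurable[ℱ t] (D i) := (hD_meas i hi1).mono (ℱ.mono hit) le_rfl
    have h2 : Measurable[ℱ t] (lam i) :=
      (hlam_meas i hi1).mono (ℱ.mono ((Nat.sub_le i 1).trans hit)) le_rfl
    have h3 : Measurable[ℱ t] (μ[D i | ℱ (i - 1)]) :=
      (stronglyMeasurable_condExp.measurable).mono (ℱ.mono ((Nat.sub_le i 1).trans hit)) le_rfl
    exact (measurable_const.add (h2.mul h1)).div (measurable_const.add (h2.mul h3))
  -- integrability of Y
  have hYint : ∀ t, Integrable (Y t) μ := by
    intro t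
    refine ⟨((hYmeas t).mono (ℱ.le t) le_rfl).aestronglyMeasurable,
      HasFiniteIntegral.of_bounded (C := A ^ (Finset.Icc 1 t).card) ?_⟩
    have hball : ∀ᵐ ω ∂μ, ∀ i ∈ Finset.Icc 1 t,
        |(1 + lam i ω * D i ω) / (1 + lam i ω * (μ[D i | ℱ (i - 1)]) ω)| ≤ A :=
      (ae_ball_iff (Finset.Icc 1 t).countable_toSet).2
        fun i hi => hfac_bdd i (Finset.mem_Icc.mp hi).1
    filter_upwards [hball] with ω hω
    rw [Real.norm_eq_abs, hY, Finset.abs_prod]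
    calc ∏ i ∈ Finset.Icc 1 t,
          |(1 + lam i ω * D i ω) / (1 + lam i ω * (μ[D i | ℱ (i - 1)]) ω)|
        ≤ ∏ _i ∈ Finset.Icc 1 t, A :=
          Finset.prod_le_prod (fun i _ => abs_nonneg _) hω
      _ = A ^ (Finset.Icc 1 t).card := Finset.prod_const _
  -- one-step martingale property
  have hstep : ∀ n, Y n =ᵐ[μ] μ[Y (n + 1) | ℱ n] := by
    intro n
    have hi : 1 ≤ n + 1 := Nat.succ_le_succ (Nat.zero_le n)
    set G : Ω → ℝ := fun ω => Y n ω / (1 + lam (n + 1) ω * (μ[D (n + 1) | ℱ n]) ω) with hGdef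
    set N : Ω → ℝ := fun ω => 1 + lam (n + 1) ω * D (n + 1) ω with hNdef
    have hsplit : Y (n + 1) = G * N := by
      funext ω
      simp only [hGdef, hNdef, Pi.mul_apply]
      rw [hY (n + 1) ω, Finset.prod_Icc_succ_top hi, ← hY n ω]
      simp only [Nat.add_sub_cancel]
      ring
    have hlam' : Measurable[ℱ n] (lam (n + 1)) := by
      have := hlam_meas (n + 1) hi
      rwa [Nat.add_sub_cancel] at this
    have hGmeas : StronglyMeasurable[ℱ n] G := by
      apply Measurable.stronglyMeasurable
      exact (hYmeas n).div
        (measurable_const.add (hlam'.mul stronglyMeasurable_condExp.measurable))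
    have hNint' : Integrable N μ := hNint (n + 1) hi
    have hGNint : Integrable (G * N) μ := hsplit ▸ hYint (n + 1)
    have hpull := condExp_mul_of_stronglyMeasurable_left (μ := μ) hGmeas hGNint hNint'
    have hkey := key (n + 1) hi
    rw [Nat.add_sub_cancel] at hkey
    have hden' := hden (n + 1) hi
    rw [Nat.add_sub_cancel] at hden'
    refine Filter.EventuallyEq.symm ?_
    calc μ[Y (n + 1) | ℱ n] = μ[G * N | ℱ n] := by rw [hsplit]
      _ =ᵐ[μ] G * μ[N | ℱ n] := hpull
      _ =ᵐ[μ] Y n := by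
          filter_upwards [hkey, hden'] with ω h1 h2
          have hne : (1 + lam (n + 1) ω * (μ[D (n + 1) | ℱ n]) ω) ≠ 0 :=
            ne_of_gt (lt_of_lt_of_le hδ h2)
          simp only [Pi.mul_apply, hGdef]
          rw [h1, div_mul_cancel₀ _ hne]
  have hadp : StronglyAdapted ℱ Y := fun n => (hYmeas n).stronglyMeasurable
  have hmart : Martingale Y ℱ μ := martingale_nat hadp hYint hstep
  refine ⟨hmart, fun t => ?_⟩
  have hY0 : Y 0 = fun _ => (1 : ℝ) := funext fun ω => by simp [hY]
  calc ∫ ω, Y t ω ∂μ = ∫ ω, (μ[Y t | ℱ 0]) ω ∂μ := (integral_condExp (ℱ.le 0)).symm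
    _ = ∫ ω, Y 0 ω ∂μ := integral_congr_ae (hmart.2 0 t (Nat.zero_le t))
    _ = 1 := by rw [hY0]; simp
end

section
/- Let T ≥ 1, let D_1, …, D_T be real numbers with D_t² ≤ M² for all t, where M > 0, and let β > 0. Then Σ_{t=1}^T D_t²/( Σ_{i=1}^{t-1} D_i² + β ) ≤ ( (M²/β)/log(1 + M²/β) )·log( (Σ_{t=1}^T D_t²)/β + 1 ), where the empty sum Σ_{i=1}^{0} D_i² is 0. -/
open Finset Real

lemma key_concave (γ u : ℝ) (hγ : 0 < γ) (h0 : 0 ≤ u) (h1 : u ≤ γ) :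
    u * Real.log (1 + γ) ≤ γ * Real.log (1 + u) := by
  have hconc := strictConcaveOn_log_Ioi.concaveOn
  have hx : (1:ℝ) ∈ Set.Ioi (0:ℝ) := by norm_num
  have hy : (1 + γ) ∈ Set.Ioi (0:ℝ) := by simp; linarith
  have ha : 0 ≤ 1 - u / γ := by
    have : u / γ ≤ 1 := (div_le_one hγ).2 h1
    linarith
  have hb : 0 ≤ u / γ := div_nonneg h0 hγ.le
  have hab : (1 - u / γ) + u / γ = 1 := by ring
  have h := hconc.2 hx hy ha hb hab
  simp only [smul_eq_mul, Real.log_one, mul_zero] at h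
  have heq : (1 - u / γ) * 1 + u / γ * (1 + γ) = 1 + u := by
    field_simp
    ring
  rw [heq] at h
  have hL : 0 ≤ Real.log (1 + u) := Real.log_nonneg (by linarith)
  have := mul_le_mul_of_nonneg_left h hγ.le
  have hne : γ ≠ 0 := hγ.ne'
  calc u * Real.log (1 + γ) = γ * (u / γ * Real.log (1 + γ)) := by field_simp
    _ ≤ γ * Real.log (1 + u) := by
        apply mul_le_mul_of_nonneg_left _ hγ.le
        linarith [h]

lemma step_lem (M β S a : ℝ) (hM : 0 < M) (hβ : 0 < β) (hS : 0 ≤ S) (ha0 : 0 ≤ a)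
    (ha : a ≤ M ^ 2) :
    a / (S + β) ≤ (M ^ 2 / β) / Real.log (1 + M ^ 2 / β) * Real.log ((S + a + β) / (S + β)) := by
  set γ := M ^ 2 / β with hγdef
  have hγ : 0 < γ := div_pos (pow_pos hM 2) hβ
  have hSβ : 0 < S + β := by linarith
  set u := a / (S + β) with hudef
  have hu0 : 0 ≤ u := div_nonneg ha0 hSβ.le
  have huγ : u ≤ γ := div_le_div₀ (pow_pos hM 2).le ha hβ (by linarith)
  have hlogeq : Real.log ((S + a + β) / (S + β)) = Real.log (1 + u) := by
    rw [hudef]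
    congr 1
    field_simp
    ring
  rw [hlogeq]
  have hL : 0 < Real.log (1 + γ) := Real.log_pos (by linarith)
  have hkey := key_concave γ u hγ hu0 huγ
  rw [div_mul_eq_mul_div, le_div_iff₀ hL]
  linarith

lemma aux_lem (D : ℕ → ℝ) (M β : ℝ) (hM : 0 < M) (hβ : 0 < β) :
    ∀ T : ℕ, (∀ t, 1 ≤ t → t ≤ T → (D t) ^ 2 ≤ M ^ 2) →
    ∑ t ∈ Finset.Icc 1 T, (D t) ^ 2 / ((∑ i ∈ Finset.Icc 1 (t - 1), (D i) ^ 2) + β) ≤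
      ((M ^ 2 / β) / Real.log (1 + M ^ 2 / β)) *
        Real.log (((∑ t ∈ Finset.Icc 1 T, (D t) ^ 2) + β) / β) := by
  intro T
  induction T with
  | zero => intro _; simp [div_self hβ.ne']
  | succ n ih =>
    intro hD
    have hD' : ∀ t, 1 ≤ t → t ≤ n → (D t) ^ 2 ≤ M ^ 2 := fun t h1 h2 => hD t h1 (by omega)
    have ihn := ih hD'
    set S := ∑ t ∈ Finset.Icc 1 n, (D t) ^ 2 with hSdef
    have hS0 : 0 ≤ S := Finset.sum_nonneg fun i _ => sq_nonneg _
    have hsum : ∑ t ∈ Finset.Icc 1 (n+1), (D t) ^ 2 = S + (D (n+1))^2 := by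
      rw [Finset.sum_Icc_succ_top (by omega)]
    have hsumL : ∑ t ∈ Finset.Icc 1 (n+1), (D t) ^ 2 / ((∑ i ∈ Finset.Icc 1 (t - 1), (D i) ^ 2) + β)
        = (∑ t ∈ Finset.Icc 1 n, (D t) ^ 2 / ((∑ i ∈ Finset.Icc 1 (t - 1), (D i) ^ 2) + β))
          + (D (n+1))^2 / (S + β) := by
      rw [Finset.sum_Icc_succ_top (by omega)]
      simp
      rfl
    rw [hsumL, hsum]
    have hstep := step_lem M β S ((D (n+1))^2) hM hβ hS0 (sq_nonneg _)
      (hD (n+1) (by omega) le_rfl)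
    have hSβ : 0 < S + β := by linarith
    have hlogsplit : Real.log ((S + (D (n+1))^2 + β) / β)
        = Real.log ((S + β)/β) + Real.log ((S + (D (n+1))^2 + β) / (S + β)) := by
      rw [← Real.log_mul (by positivity) (by positivity)]
      congr 1
      field_simp
    rw [hlogsplit, mul_add]
    exact add_le_add ihn hstep

/-- Self-normalized sum bound: if `D_t² ≤ M²` for all `t`, then
`Σ_{t=1}^T D_t² / (Σ_{i<t} D_i² + β) ≤ ((M²/β)/log(1+M²/β)) · log(Σ D_t²/β + 1)`. -/
theorem stmt_13 (T : ℕ) (hT : 1 ≤ T) (D : ℕ → ℝ) (M β : ℝ) (hM : 0 < M) (hβ : 0 < β)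
    (hD : ∀ t, 1 ≤ t → t ≤ T → (D t) ^ 2 ≤ M ^ 2) :
    ∑ t ∈ Finset.Icc 1 T, (D t) ^ 2 / ((∑ i ∈ Finset.Icc 1 (t - 1), (D i) ^ 2) + β) ≤
      ((M ^ 2 / β) / Real.log (1 + M ^ 2 / β)) *
        Real.log ((∑ t ∈ Finset.Icc 1 T, (D t) ^ 2) / β + 1) := by
  have h := aux_lem D M β hM hβ T hD
  have heq : ((∑ t ∈ Finset.Icc 1 T, (D t) ^ 2) + β) / β
      = (∑ t ∈ Finset.Icc 1 T, (D t) ^ 2) / β + 1 := by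
    field_simp
  rwa [heq] at h
end
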